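/- arXiv:1301.4643 — 6 statements merged into one kernel-verified Lean document; each statement's English description precedes it below -/
import Mathlib

section
/- Construction of constant-rank codes: Let M be a constant-dimension code in the Grassmannian of r-dimensional subspaces of F_q^m with minimum subspace distance d_{S,M}, and N a constant-dimension code of r-dimensional subspaces of F_q^n with minimum subspace distance d_{S,N}, with r ≤ min{m,n}. Then there exists a set C of m×n matrices over F_q, all of rank exactly r, with |C| = min{|M|,|N|}, whose column spaces belong to M, whose row spaces belong to N, and whose pairwise rank distances satisfy rk(A−B) ≥ (1/2)·d_{S,M} + (1/2)·d_{S,N} for all distinct A, B ∈ C. -/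
open Matrix

/-- The subspace distance `d_S(U,V) = dim(U+V) - dim(U ∩ V)`. -/
noncomputable def subspaceDist {F : Type*} [Field F] {M : Type*} [AddCommGroup M] [Module F M]
    (U V : Submodule F M) : ℕ :=
  Module.finrank F ↥(U ⊔ V) - Module.finrank F ↥(U ⊓ V)

/-- The row space of a matrix: the span of its rows. -/
noncomputable def rowSpace {F : Type*} [Field F] {m : ℕ} {ι : Type*}
    (X : Matrix (Fin m) ι F) : Submodule F (ι → F) :=
  Submodule.span F (Set.range fun i => X i)

/-- The column space of a matrix: the span of its columns. -/
noncomputable def colSpace {F : Type*} [Field F] {m n : ℕ}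
    (X : Matrix (Fin m) (Fin n) F) : Submodule F (Fin m → F) :=
  rowSpace Xᵀ


section Helpers

open Module LinearMap Submodule

variable {F : Type*} [Field F]

private lemma finrank_map_add_finrank_inf_ker' {V W : Type*} [AddCommGroup V] [Module F V]
    [AddCommGroup W] [Module F W] [FiniteDimensional F V]
    (π : V →ₗ[F] W) (p : Submodule F V) :
    finrank F ↥(p.map π) + finrank F ↥(p ⊓ ker π) = finrank F ↥p := by
  have h := LinearMap.finrank_range_add_finrank_ker (π.domRestrict p)
  rw [LinearMap.range_domRestrict, LinearMap.ker_domRestrict] at h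
  have h2 : finrank F ↥((ker π).comap p.subtype) = finrank F ↥(p ⊓ ker π) := by
    rw [← Submodule.finrank_map_subtype_eq p, Submodule.map_comap_subtype]
  rw [h2] at h
  exact h

private lemma colSpace_eq_range' {m n : ℕ} (A : Matrix (Fin m) (Fin n) F) :
    colSpace A = LinearMap.range A.mulVecLin := by
  rw [colSpace, rowSpace, Matrix.range_mulVecLin, Matrix.col]

private lemma rowSpace_eq_range' {m n : ℕ} (A : Matrix (Fin m) (Fin n) F) :
    rowSpace A = LinearMap.range Aᵀ.mulVecLin := by
  rw [rowSpace, Matrix.range_mulVecLin, Matrix.col, Matrix.transpose_transpose]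

private lemma rank_eq_finrank_colSpace' {m n : ℕ} (A : Matrix (Fin m) (Fin n) F) :
    A.rank = finrank F ↥(colSpace A) := by
  rw [Matrix.rank, colSpace_eq_range']

private lemma span_range_basis_coe' {d : ℕ} {κ : Type*} (W : Submodule F (Fin d → F))
    (b : Basis κ F ↥W) :
    Submodule.span F (Set.range fun i => ((b i : ↥W) : Fin d → F)) = W := by
  have : (fun i => ((b i : ↥W) : Fin d → F)) = W.subtype ∘ b := rfl
  rw [this, Set.range_comp, ← Submodule.map_span, b.span_eq, Submodule.map_subtype_top]

private lemma exists_matrix_of_spaces' {m n r : ℕ} (U : Submodule F (Fin m → F))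
    (V : Submodule F (Fin n → F)) (hU : finrank F ↥U = r) (hV : finrank F ↥V = r) :
    ∃ A : Matrix (Fin m) (Fin n) F, colSpace A = U ∧ rowSpace A = V := by
  obtain ⟨bU⟩ : Nonempty (Basis (Fin r) F ↥U) := ⟨Module.finBasisOfFinrankEq F ↥U hU⟩
  obtain ⟨bV⟩ : Nonempty (Basis (Fin r) F ↥V) := ⟨Module.finBasisOfFinrankEq F ↥V hV⟩
  set X : Matrix (Fin m) (Fin r) F := Matrix.of fun a b => ((bU b : ↥U) : Fin m → F) a with hX
  set Y : Matrix (Fin r) (Fin n) F := Matrix.of fun b c => ((bV b : ↥V) : Fin n → F) c with hY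
  have hXT : Xᵀ = fun b => ((bU b : ↥U) : Fin m → F) := rfl
  have hXcol : LinearMap.range X.mulVecLin = U := by
    rw [Matrix.range_mulVecLin, Matrix.col, hXT, span_range_basis_coe']
  have hYrow : Submodule.span F (Set.range Y) = V := by
    have : Set.range Y = Set.range fun b => ((bV b : ↥V) : Fin n → F) := rfl
    rw [this, span_range_basis_coe']
  have hYrank : Y.rank = r := by
    rw [← Matrix.rank_transpose, Matrix.rank, Matrix.range_mulVecLin,
      Matrix.col, Matrix.transpose_transpose, hYrow, hV]
  have hYtop : LinearMap.range Y.mulVecLin = ⊤ := by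
    apply Submodule.eq_top_of_finrank_eq
    rw [← Matrix.rank, hYrank, Module.finrank_fin_fun]
  have hXrank : X.rank = r := by rw [Matrix.rank, hXcol, hU]
  have hXTtop : LinearMap.range Xᵀ.mulVecLin = ⊤ := by
    apply Submodule.eq_top_of_finrank_eq
    rw [← Matrix.rank, Matrix.rank_transpose, hXrank, Module.finrank_fin_fun]
  refine ⟨X * Y, ?_, ?_⟩
  · rw [colSpace_eq_range', Matrix.mulVecLin_mul, LinearMap.range_comp, hYtop,
      Submodule.map_top, hXcol]
  · rw [rowSpace_eq_range', Matrix.transpose_mul, Matrix.mulVecLin_mul, LinearMap.range_comp,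
      hXTtop, Submodule.map_top, ← Matrix.transpose_transpose Y, ← rowSpace_eq_range']
    rw [Matrix.transpose_transpose]
    exact hYrow

private lemma key_rank_bound' {m n r : ℕ} (A B : Matrix (Fin m) (Fin n) F)
    (hA : finrank F ↥(colSpace A) = r) (hB : finrank F ↥(colSpace B) = r) :
    finrank F ↥(colSpace A ⊔ colSpace B) + finrank F ↥(rowSpace A ⊔ rowSpace B)
      ≤ (A - B).rank + 2 * r := by
  set f := A.mulVecLin with hf
  set g := B.mulVecLin with hg
  set h := f - g with hhdef
  have hh : (A - B).mulVecLin = h := by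
    ext x
    simp [hhdef, hf, hg, Matrix.sub_mulVec]
  set U := colSpace A
  set U' := colSpace B
  set V := rowSpace A
  set V' := rowSpace B
  set π := U'.mkQ with hπ
  have hkerπ : ker π = U' := Submodule.ker_mkQ U'
  have e1 : finrank F ↥((LinearMap.range h).map π) + finrank F ↥(LinearMap.range h ⊓ U')
      = finrank F ↥(LinearMap.range h) := by
    have := finrank_map_add_finrank_inf_ker' π (LinearMap.range h)
    rwa [hkerπ] at this
  have hU'g : U' = LinearMap.range g := colSpace_eq_range' B
  have hπg : ∀ x, π (g x) = 0 := by
    intro x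
    rw [← LinearMap.mem_ker, hkerπ, hU'g]
    exact LinearMap.mem_range_self g x
  have e2 : (LinearMap.range h).map π = U.map π := by
    have hcomp : π ∘ₗ h = π ∘ₗ f := by
      refine LinearMap.ext fun x => ?_
      simp [hhdef, map_sub, hπg x]
    calc (LinearMap.range h).map π = LinearMap.range (π ∘ₗ h) := (LinearMap.range_comp _ _).symm
      _ = LinearMap.range (π ∘ₗ f) := by rw [hcomp]
      _ = (LinearMap.range f).map π := LinearMap.range_comp _ _
      _ = U.map π := by rw [← colSpace_eq_range']
  have e3 : finrank F ↥(U.map π) + finrank F ↥(U ⊓ U') = r := by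
    have := finrank_map_add_finrank_inf_ker' π U
    rwa [hkerπ, hA] at this
  have e4 : finrank F ↥(U ⊔ U') + finrank F ↥(U ⊓ U') = r + r := by
    rw [Submodule.finrank_sup_add_finrank_inf_eq, hA, hB]
  have e5 : finrank F ↥((ker f).map g) ≤ finrank F ↥(LinearMap.range h ⊓ U') := by
    apply Submodule.finrank_mono
    rintro y hy
    rw [Submodule.mem_map] at hy
    obtain ⟨x, hx, rfl⟩ := hy
    rw [LinearMap.mem_ker] at hx
    constructor
    · refine ⟨-x, ?_⟩
      simp [hhdef, hx]
    · rw [hU'g]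
      exact LinearMap.mem_range_self g x
  have e7 : finrank F ↥((ker f).map g) + finrank F ↥(ker f ⊓ ker g) = finrank F ↥(ker f) :=
    finrank_map_add_finrank_inf_ker' g (ker f)
  have e8 : r + finrank F ↥(ker f) = n := by
    have := LinearMap.finrank_range_add_finrank_ker f
    rwa [← colSpace_eq_range', hA, Module.finrank_fin_fun] at this
  have e10 : ker f ⊓ ker g = ker (Matrix.fromRows A B).mulVecLin := by
    ext x
    simp only [Submodule.mem_inf, LinearMap.mem_ker, hf, hg, Matrix.mulVecLin_apply,
      Matrix.fromRows_mulVec, funext_iff, Sum.forall, Pi.zero_apply, Sum.elim_inl, Sum.elim_inr]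
  have e11 : (Matrix.fromRows A B).rank = finrank F ↥(V ⊔ V') := by
    rw [← Matrix.rank_transpose, Matrix.rank, Matrix.range_mulVecLin, Matrix.col,
      Matrix.transpose_transpose]
    have hrange : Set.range (Matrix.fromRows A B) = Set.range A ∪ Set.range B := by
      ext y
      constructor
      · rintro ⟨(i | i), rfl⟩
        · exact Or.inl ⟨i, rfl⟩
        · exact Or.inr ⟨i, rfl⟩
      · rintro (⟨i, rfl⟩ | ⟨i, rfl⟩)
        · exact ⟨Sum.inl i, rfl⟩
        · exact ⟨Sum.inr i, rfl⟩
    rw [hrange, Submodule.span_union]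
    rfl
  have e12 : finrank F ↥(V ⊔ V') + finrank F ↥(ker f ⊓ ker g) = n := by
    have := LinearMap.finrank_range_add_finrank_ker (Matrix.fromRows A B).mulVecLin
    rw [Module.finrank_fin_fun] at this
    rw [← e11, e10, Matrix.rank] at *
    exact this
  have e13 : (A - B).rank = finrank F ↥(LinearMap.range h) := by
    rw [Matrix.rank, hh]
  rw [e13]
  rw [e2] at e1
  omega

end Helpers

/-- Construction of constant-rank codes from two constant-dimension codes `M` (in `F_q^m`)
and `N` (in `F_q^n`) of dimension `r` with minimum subspace distances `d_{S,M}`, `d_{S,N}`: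
there is a set of `min{|M|,|N|}` matrices of rank exactly `r`, with column spaces in `M`,
row spaces in `N`, and pairwise rank distance at least `½ d_{S,M} + ½ d_{S,N}`. -/
theorem constant_rank_code_construction {F : Type*} [Field F] [Fintype F] {m n r : ℕ}
    (hr : r ≤ min m n)
    (M : Finset (Submodule F (Fin m → F))) (N : Finset (Submodule F (Fin n → F)))
    (dSM dSN : ℕ)
    (hMdim : ∀ U ∈ M, Module.finrank F ↥U = r)
    (hNdim : ∀ U ∈ N, Module.finrank F ↥U = r)
    (hMdist : ∀ U ∈ M, ∀ V ∈ M, U ≠ V → dSM ≤ subspaceDist U V)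
    (hNdist : ∀ U ∈ N, ∀ V ∈ N, U ≠ V → dSN ≤ subspaceDist U V) :
    ∃ C : Finset (Matrix (Fin m) (Fin n) F),
      C.card = min M.card N.card ∧
      (∀ A ∈ C, A.rank = r) ∧
      (∀ A ∈ C, colSpace A ∈ M) ∧
      (∀ A ∈ C, rowSpace A ∈ N) ∧
      (∀ A ∈ C, ∀ B ∈ C, A ≠ B →
        (dSM : ℚ) / 2 + (dSN : ℚ) / 2 ≤ (((A - B) : Matrix (Fin m) (Fin n) F).rank : ℚ)) := by
  classical
  set k := min M.card N.card with hk
  have hkM : k ≤ M.card := min_le_left _ _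
  have hkN : k ≤ N.card := min_le_right _ _
  have cardM : Fintype.card ↥M = M.card := Fintype.card_coe M
  have cardN : Fintype.card ↥N = N.card := Fintype.card_coe N
  let eM : Fin (Fintype.card ↥M) ≃ ↥M := (Fintype.equivFin ↥M).symm
  let eN : Fin (Fintype.card ↥N) ≃ ↥N := (Fintype.equivFin ↥N).symm
  let uS : Fin k → ↥M := fun i => eM ⟨i, by have := i.2; omega⟩
  let vS : Fin k → ↥N := fun i => eN ⟨i, by have := i.2; omega⟩
  have uSinj : Function.Injective uS := by
    intro i j hij
    have h2 := eM.injective hij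
    rw [Fin.mk.injEq] at h2
    exact Fin.ext h2
  have vSinj : Function.Injective vS := by
    intro i j hij
    have h2 := eN.injective hij
    rw [Fin.mk.injEq] at h2
    exact Fin.ext h2
  have hudim : ∀ i, Module.finrank F ↥((uS i : Submodule F (Fin m → F))) = r :=
    fun i => hMdim _ (uS i).2
  have hvdim : ∀ i, Module.finrank F ↥((vS i : Submodule F (Fin n → F))) = r :=
    fun i => hNdim _ (vS i).2
  choose Af hcol hrow using fun i : Fin k =>
    exists_matrix_of_spaces' (uS i : Submodule F (Fin m → F)) (vS i : Submodule F (Fin n → F))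
      (hudim i) (hvdim i)
  have hAinj : Function.Injective Af := by
    intro i j hij
    apply uSinj
    apply Subtype.ext
    rw [← hcol i, ← hcol j, hij]
  refine ⟨(Finset.univ : Finset (Fin k)).image Af, ?_, ?_, ?_, ?_, ?_⟩
  · rw [Finset.card_image_of_injective _ hAinj, Finset.card_univ, Fintype.card_fin]
  · intro A hA
    obtain ⟨i, _, rfl⟩ := Finset.mem_image.1 hA
    rw [rank_eq_finrank_colSpace', hcol i, hudim i]
  · intro A hA
    obtain ⟨i, _, rfl⟩ := Finset.mem_image.1 hA
    rw [hcol i]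
    exact (uS i).2
  · intro A hA
    obtain ⟨i, _, rfl⟩ := Finset.mem_image.1 hA
    rw [hrow i]
    exact (vS i).2
  · intro A hA B hB hAB
    obtain ⟨i, _, rfl⟩ := Finset.mem_image.1 hA
    obtain ⟨j, _, rfl⟩ := Finset.mem_image.1 hB
    have hij : i ≠ j := fun e => hAB (by rw [e])
    have hUne : (uS i : Submodule F (Fin m → F)) ≠ (uS j : Submodule F (Fin m → F)) :=
      fun e => hij (uSinj (Subtype.ext e))
    have hVne : (vS i : Submodule F (Fin n → F)) ≠ (vS j : Submodule F (Fin n → F)) :=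
      fun e => hij (vSinj (Subtype.ext e))
    have hM' := hMdist _ (uS i).2 _ (uS j).2 hUne
    have hN' := hNdist _ (vS i).2 _ (vS j).2 hVne
    rw [subspaceDist] at hM' hN'
    have key := key_rank_bound' (r := r) (Af i) (Af j)
      (by rw [hcol i]; exact hudim i) (by rw [hcol j]; exact hudim j)
    rw [hcol i, hcol j, hrow i, hrow j] at key
    have e4M : Module.finrank F ↥((uS i : Submodule F (Fin m → F)) ⊔ (uS j : Submodule F (Fin m → F)))
        + Module.finrank F ↥((uS i : Submodule F (Fin m → F)) ⊓ (uS j : Submodule F (Fin m → F)))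
        = r + r := by
      rw [Submodule.finrank_sup_add_finrank_inf_eq, hudim i, hudim j]
    have e4N : Module.finrank F ↥((vS i : Submodule F (Fin n → F)) ⊔ (vS j : Submodule F (Fin n → F)))
        + Module.finrank F ↥((vS i : Submodule F (Fin n → F)) ⊓ (vS j : Submodule F (Fin n → F)))
        = r + r := by
      rw [Submodule.finrank_sup_add_finrank_inf_eq, hvdim i, hvdim j]
    have hinfM : Module.finrank F ↥((uS i : Submodule F (Fin m → F)) ⊓ (uS j : Submodule F (Fin m → F))) ≤ r := by
      rw [← hudim i]
      exact Submodule.finrank_mono inf_le_left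
    have hinfN : Module.finrank F ↥((vS i : Submodule F (Fin n → F)) ⊓ (vS j : Submodule F (Fin n → F))) ≤ r := by
      rw [← hvdim i]
      exact Submodule.finrank_mono inf_le_left
    have hnat : dSM + dSN ≤ 2 * (Af i - Af j).rank := by omega
    have hcast : (dSM : ℚ) + (dSN : ℚ) ≤ 2 * ((Af i - Af j).rank : ℚ) := by
      exact_mod_cast hnat
    linarith
end

section
/- Lower bound on the list size of Gabidulin codes: For the Gabidulin code Gab[n,k] over F_{q^m} with n ≤ m, minimum rank distance d = n−k+1, and any τ < d, there exists a received word r ∈ F_{q^m}^n such that the number of codewords at rank distance exactly τ from r is at least [n choose n−τ]_q / (q^m)^{n−τ−k} ≥ q^{m}·q^{τ(m+n) − τ² − md}. -/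
/-- The rank of a vector `v ∈ L^n` over the base field `Fq` (where `L/Fq` is a field
extension): the `Fq`-dimension of the span of its entries, i.e. the rank of its matrix
representation. -/
noncomputable def vrank (Fq : Type*) [Field Fq] {L : Type*} [Field L] [Algebra Fq L]
    {n : ℕ} (v : Fin n → L) : ℕ :=
  Module.finrank Fq (Submodule.span Fq (Set.range v))

/-- The Gabidulin codeword obtained by evaluating the `q`-linearized polynomial with
coefficients `f` at the points `α`. -/
def gabCodeword (q : ℕ) {L : Type*} [Field L] {n k : ℕ} (α : Fin n → L) (f : Fin k → L) :
    Fin n → L :=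
  fun j => ∑ i : Fin k, f i * α j ^ q ^ (i : ℕ)

/-! ### Auxiliary material -/

section Aux

variable {Fq L : Type*} [Field Fq] [Fintype Fq] [Field L] [Algebra Fq L]

/-- the `Fq`-linear Frobenius-power map `x ↦ x ^ q ^ j`. -/
noncomputable def frobPow (Fq : Type*) [Field Fq] [Fintype Fq] {L : Type*} [Field L]
    [Algebra Fq L] (j : ℕ) : L →ₗ[Fq] L where
  toFun x := x ^ (Fintype.card Fq) ^ j
  map_add' x y := by
    obtain ⟨p, hpc⟩ := CharP.exists Fq
    haveI := hpc
    obtain ⟨e, hp, he⟩ := FiniteField.card Fq p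
    haveI : Fact p.Prime := ⟨hp⟩
    haveI : CharP L p := charP_of_injective_algebraMap (algebraMap Fq L).injective p
    rw [he, show (p ^ (e : ℕ)) ^ j = p ^ ((e : ℕ) * j) from (pow_mul p _ j).symm,
      add_pow_char_pow]
  map_smul' a x := by
    simp only [RingHom.id_apply]
    rw [Algebra.smul_def, Algebra.smul_def, mul_pow, ← map_pow, FiniteField.pow_card_pow]

lemma frobPow_apply (j : ℕ) (x : L) : frobPow Fq j x = x ^ (Fintype.card Fq) ^ j := rfl

/-- the `Fq`-linear map `x ↦ x^{q^s} + ∑ c i x^{q^i}`. -/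
noncomputable def qMap (Fq : Type*) [Field Fq] [Fintype Fq] {L : Type*} [Field L]
    [Algebra Fq L] (s : ℕ) (c : Fin s → L) : L →ₗ[Fq] L :=
  frobPow Fq s + ∑ i : Fin s, c i • frobPow Fq (i : ℕ)

lemma qMap_apply (s : ℕ) (c : Fin s → L) (x : L) :
    qMap Fq s c x = x ^ (Fintype.card Fq) ^ s
      + ∑ i : Fin s, c i * x ^ (Fintype.card Fq) ^ (i : ℕ) := by
  simp [qMap, frobPow_apply, smul_eq_mul]

/-- A `q`-polynomial of `q`-degree `< s` vanishing on a subspace of dimension at least `s`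
is the zero polynomial. -/
lemma qpoly_vanish [FiniteDimensional Fq L] {s : ℕ} (U : Submodule Fq L)
    (hs : s ≤ Module.finrank Fq U) (g : Fin s → L)
    (hvan : ∀ x ∈ U, ∑ i : Fin s, g i * x ^ (Fintype.card Fq) ^ (i : ℕ) = 0) :
    g = 0 := by
  classical
  haveI : Finite L := Module.finite_iff_finite.mp ‹_›
  letI : Fintype L := Fintype.ofFinite L
  set q := Fintype.card Fq with hq
  have hq2 : 2 ≤ q := Fintype.one_lt_card
  by_contra hne
  obtain ⟨i0, hi0⟩ := Function.ne_iff.mp hne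
  set P : Polynomial L := ∑ i : Fin s, Polynomial.monomial (q ^ (i : ℕ)) (g i) with hP
  have hPne : P ≠ 0 := by
    intro h0
    have : P.coeff (q ^ (i0 : ℕ)) = g i0 := by
      rw [hP, Polynomial.finset_sum_coeff]
      rw [Finset.sum_eq_single i0]
      · simp
      · intro i _ hii
        rw [Polynomial.coeff_monomial, if_neg]
        intro hqe
        exact hii (Fin.ext (Nat.pow_right_injective hq2 hqe))
      · simp
    rw [h0] at this
    simp at this
    exact hi0 this.symm
  have hroot : ∀ x ∈ U, P.eval x = 0 := by
    intro x hx
    have : P.eval x = ∑ i : Fin s, g i * x ^ q ^ (i : ℕ) := by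
      simp [hP, Polynomial.eval_finset_sum]
    rw [this]
    exact hvan x hx
  have hsub : ((U : Set L).toFinset : Finset L) ⊆ P.roots.toFinset := by
    intro x hx
    rw [Set.mem_toFinset] at hx
    rw [Multiset.mem_toFinset, Polynomial.mem_roots hPne]
    exact hroot x hx
  have hdeg : P.natDegree ≤ q ^ (s - 1) := by
    apply Polynomial.natDegree_sum_le_of_forall_le
    intro i _
    apply le_trans (Polynomial.natDegree_monomial_le _)
    exact Nat.pow_le_pow_right (le_trans one_le_two hq2) (Nat.le_sub_one_of_lt i.2)
  have hcardU : (U : Set L).toFinset.card = q ^ Module.finrank Fq U := by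
    rw [Set.toFinset_card]
    rw [show Fintype.card (U : Set L) = Fintype.card U from rfl]
    rw [Module.card_eq_pow_finrank (K := Fq) (V := U)]
  have hcard : q ^ Module.finrank Fq U ≤ q ^ (s - 1) := by
    calc q ^ Module.finrank Fq U = (U : Set L).toFinset.card := hcardU.symm
      _ ≤ P.roots.toFinset.card := Finset.card_le_card hsub
      _ ≤ Multiset.card P.roots := Multiset.toFinset_card_le _
      _ ≤ P.natDegree := Polynomial.card_roots' P
      _ ≤ q ^ (s - 1) := hdeg
  rw [Nat.pow_le_pow_iff_right hq2] at hcard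
  have : 0 < s := i0.pos
  omega

/-- vanishing on all the points of a family extends to the span. -/
lemma qpoly_vanish_on_span {n s : ℕ} (α : Fin n → L) (g : Fin s → L)
    (h : ∀ j, ∑ i : Fin s, g i * α j ^ (Fintype.card Fq) ^ (i : ℕ) = 0) :
    ∀ x ∈ Submodule.span Fq (Set.range α),
      ∑ i : Fin s, g i * x ^ (Fintype.card Fq) ^ (i : ℕ) = 0 := by
  set M : L →ₗ[Fq] L := ∑ i : Fin s, g i • frobPow Fq (i : ℕ) with hM
  have hMapp : ∀ x : L, M x = ∑ i : Fin s, g i * x ^ (Fintype.card Fq) ^ (i : ℕ) := by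
    intro x
    simp [hM, frobPow_apply, smul_eq_mul]
  have hker : Submodule.span Fq (Set.range α) ≤ LinearMap.ker M := by
    rw [Submodule.span_le]
    rintro x ⟨j, rfl⟩
    rw [SetLike.mem_coe, LinearMap.mem_ker, hMapp]
    exact h j
  intro x hx
  rw [← hMapp]
  exact (LinearMap.mem_ker).mp (hker hx)

/-- coefficients of `q`-polynomials of `q`-degree `< s` are determined by values on a
subspace of dimension at least `s`. -/
lemma qpoly_coeff_inj [FiniteDimensional Fq L] {s : ℕ} (U : Submodule Fq L)
    (hs : s ≤ Module.finrank Fq U) (c c' : Fin s → L)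
    (h : ∀ x ∈ U, ∑ i : Fin s, c i * x ^ (Fintype.card Fq) ^ (i : ℕ) =
      ∑ i : Fin s, c' i * x ^ (Fintype.card Fq) ^ (i : ℕ)) : c = c' := by
  have := qpoly_vanish U hs (c - c') (fun x hx => by
    simp only [Pi.sub_apply, sub_mul, Finset.sum_sub_distrib, h x hx, sub_self])
  exact sub_eq_zero.mp this

/-- Existence of an "annihilator" `q`-polynomial with prescribed leading term for any
`s`-dimensional subspace. -/
lemma exists_kill_coeffs [FiniteDimensional Fq L] (s : ℕ) (U : Submodule Fq L)
    (hU : Module.finrank Fq U = s) :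
    ∃ c : Fin s → L, ∀ x ∈ U, qMap Fq s c x = 0 := by
  classical
  set q := Fintype.card Fq with hq
  haveI : Finite L := Module.finite_iff_finite.mp ‹_›
  letI : Fintype L := Fintype.ofFinite L
  let b : Module.Basis (Fin s) Fq U := (Module.finBasis Fq U).reindex (finCongr hU)
  let u : Fin s → L := fun j => (b j : L)
  have hspan : Submodule.span Fq (Set.range u) = U := by
    have : Set.range u = U.subtype '' Set.range b := by
      rw [← Set.range_comp]; rfl
    rw [this, ← Submodule.map_span, b.span_eq, Submodule.map_top, Submodule.range_subtype]
  set w : Fin s → (Fin s → L) := fun i => fun j => u j ^ q ^ (i : ℕ) with hw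
  have hli : LinearIndependent L w := by
    rw [Fintype.linearIndependent_iff]
    intro g hg
    have hvan : ∀ x ∈ U, ∑ i : Fin s, g i * x ^ q ^ (i : ℕ) = 0 := by
      rw [← hspan]
      apply qpoly_vanish_on_span
      intro j
      have := congrFun hg j
      simpa [hw] using this
    have := qpoly_vanish U (le_of_eq hU.symm) g hvan
    intro i
    rw [this]
    rfl
  have hspanw : Submodule.span L (Set.range w) = ⊤ :=
    hli.span_eq_top_of_card_eq_finrank' (by rw [Fintype.card_fin, Module.finrank_fin_fun])
  have hbvec : (fun j => -(u j ^ q ^ s)) ∈ Submodule.span L (Set.range w) := by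
    rw [hspanw]; trivial
  rw [Submodule.mem_span_range_iff_exists_fun] at hbvec
  obtain ⟨c, hc⟩ := hbvec
  refine ⟨c, ?_⟩
  have hker : U ≤ LinearMap.ker (qMap Fq s c) := by
    rw [← hspan, Submodule.span_le]
    rintro x ⟨j, rfl⟩
    rw [SetLike.mem_coe, LinearMap.mem_ker, qMap_apply]
    have := congrFun hc j
    simp only [Finset.sum_apply, Pi.smul_apply, smul_eq_mul, hw] at this
    rw [this]
    ring
  intro x hx
  exact (LinearMap.mem_ker).mp (hker hx)

/-- The kernel of the annihilator map is exactly the subspace. -/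
lemma ker_qMap_eq [FiniteDimensional Fq L] (s : ℕ) (c : Fin s → L) (U : Submodule Fq L)
    (hU : Module.finrank Fq U = s) (hc : ∀ x ∈ U, qMap Fq s c x = 0) :
    LinearMap.ker (qMap Fq s c) = U := by
  classical
  haveI : Finite L := Module.finite_iff_finite.mp ‹_›
  letI : Fintype L := Fintype.ofFinite L
  set q := Fintype.card Fq with hq
  have hq2 : 2 ≤ q := Fintype.one_lt_card
  have hUle : U ≤ LinearMap.ker (qMap Fq s c) := fun x hx => by
    rw [LinearMap.mem_ker]; exact hc x hx
  set P : Polynomial L :=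
    Polynomial.X ^ q ^ s + ∑ i : Fin s, Polynomial.monomial (q ^ (i : ℕ)) (c i) with hP
  have hPne : P ≠ 0 := by
    intro h0
    have : P.coeff (q ^ s) = 1 := by
      rw [hP, Polynomial.coeff_add, Polynomial.coeff_X_pow, if_pos rfl,
        Polynomial.finset_sum_coeff]
      rw [Finset.sum_eq_zero, add_zero]
      intro i _
      rw [Polynomial.coeff_monomial, if_neg]
      intro hqe
      exact absurd (Nat.pow_right_injective hq2 hqe) (Nat.ne_of_lt i.2)
    rw [h0] at this
    simp at this
  have hdeg : P.natDegree ≤ q ^ s := by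
    apply le_trans (Polynomial.natDegree_add_le _ _)
    apply max_le
    · exact le_of_eq (Polynomial.natDegree_X_pow _)
    · apply le_trans (Polynomial.natDegree_sum_le_of_forall_le _ _ ?_) le_rfl
      intro i _
      exact le_trans (Polynomial.natDegree_monomial_le _)
        (Nat.pow_le_pow_right (le_trans one_le_two hq2) (le_of_lt i.2))
  have hroots : ((LinearMap.ker (qMap Fq s c) : Set L).toFinset : Finset L) ⊆
      P.roots.toFinset := by
    intro x hx
    rw [Set.mem_toFinset, SetLike.mem_coe, LinearMap.mem_ker] at hx
    rw [Multiset.mem_toFinset, Polynomial.mem_roots hPne]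
    rw [Polynomial.IsRoot, hP]
    rw [Polynomial.eval_add, Polynomial.eval_pow, Polynomial.eval_X,
      Polynomial.eval_finset_sum]
    simp only [Polynomial.eval_monomial]
    rw [qMap_apply] at hx
    exact hx
  have hcardker : (LinearMap.ker (qMap Fq s c) : Set L).toFinset.card ≤ q ^ s := by
    calc (LinearMap.ker (qMap Fq s c) : Set L).toFinset.card
        ≤ P.roots.toFinset.card := Finset.card_le_card hroots
      _ ≤ Multiset.card P.roots := Multiset.toFinset_card_le _
      _ ≤ P.natDegree := Polynomial.card_roots' P
      _ ≤ q ^ s := hdeg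
  have hcardU : (U : Set L).toFinset.card = q ^ s := by
    rw [Set.toFinset_card]
    rw [show Fintype.card (U : Set L) = Fintype.card U from rfl]
    rw [Module.card_eq_pow_finrank (K := Fq) (V := U), hU]
  have hsub : (U : Set L).toFinset ⊆ (LinearMap.ker (qMap Fq s c) : Set L).toFinset := by
    intro x hx
    rw [Set.mem_toFinset] at hx ⊢
    exact hUle hx
  have heq : (U : Set L).toFinset = (LinearMap.ker (qMap Fq s c) : Set L).toFinset :=
    Finset.eq_of_subset_of_card_le hsub (by rw [hcardU]; exact hcardker)
  apply le_antisymm _ hUle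
  intro x hx
  have : x ∈ (U : Set L).toFinset := by
    rw [heq, Set.mem_toFinset]
    exact hx
  rwa [Set.mem_toFinset] at this

/-- The rank of the evaluation of an annihilator polynomial. -/
lemma vrank_qMap [FiniteDimensional Fq L] {n s τ : ℕ} (α : Fin n → L)
    (hα : LinearIndependent Fq α) (hsτ : s + τ = n) (c : Fin s → L) (U : Submodule Fq L)
    (hUA : U ≤ Submodule.span Fq (Set.range α)) (hU : Module.finrank Fq U = s)
    (hc : ∀ x ∈ U, qMap Fq s c x = 0) :
    vrank Fq (fun j => qMap Fq s c (α j)) = τ := by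
  classical
  set A := Submodule.span Fq (Set.range α) with hA
  have hker := ker_qMap_eq s c U hU hc
  set f : A →ₗ[Fq] L := (qMap Fq s c) ∘ₗ A.subtype with hf
  have hrange : LinearMap.range f = Submodule.map (qMap Fq s c) A := by
    rw [hf, LinearMap.range_comp, Submodule.range_subtype]
  have hkerf : LinearMap.ker f = Submodule.comap A.subtype U := by
    rw [hf, LinearMap.ker_comp, hker]
  have hdimker : Module.finrank Fq (LinearMap.ker f) = s := by
    rw [hkerf, ← hU]
    exact LinearEquiv.finrank_eq (Submodule.comapSubtypeEquivOfLe hUA)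
  have hdimA : Module.finrank Fq A = n := by
    rw [hA, finrank_span_eq_card hα, Fintype.card_fin]
  have hrn := LinearMap.finrank_range_add_finrank_ker f
  rw [hdimker, hdimA] at hrn
  have hspanv : Submodule.span Fq (Set.range fun j => qMap Fq s c (α j)) =
      Submodule.map (qMap Fq s c) A := by
    rw [hA, Submodule.map_span]
    congr 1
    rw [← Set.range_comp]
    rfl
  rw [vrank, hspanv, ← hrange]
  omega

/-- The number of linearly independent `s`-tuples in a module of dimension `ν` over `Fq`
is `∏ i < s, (q^ν - q^i)`. -/
lemma card_li_tuples {V : Type*} [AddCommGroup V] [Module Fq V] [Finite V]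
    (s : ℕ) (hs : s ≤ Module.finrank Fq V) :
    Nat.card {t : Fin s → V // LinearIndependent Fq t} =
      ∏ i ∈ Finset.range s,
        (Fintype.card Fq ^ Module.finrank Fq V - Fintype.card Fq ^ i) := by
  classical
  letI : Fintype V := Fintype.ofFinite V
  induction s with
  | zero =>
      rw [Finset.range_zero, Finset.prod_empty]
      haveI : Nonempty {t : Fin 0 → V // LinearIndependent Fq t} :=
        ⟨⟨fun i => i.elim0, linearIndependent_empty_type⟩⟩
      haveI : Subsingleton {t : Fin 0 → V // LinearIndependent Fq t} :=
        ⟨fun a b => Subtype.ext (Subsingleton.elim _ _)⟩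
      exact Nat.card_unique
  | succ s ih =>
      have hs' : s ≤ Module.finrank Fq V := le_trans (Nat.le_succ s) hs
      set F : (Σ t : {t : Fin s → V // LinearIndependent Fq t},
          {x : V // x ∉ Submodule.span Fq (Set.range t.1)}) →
          {t : Fin (s+1) → V // LinearIndependent Fq t} :=
        fun p => ⟨Fin.snoc p.1.1 p.2.1, linearIndependent_fin_snoc.mpr ⟨p.1.2, p.2.2⟩⟩ with hF
      have hbij : Function.Bijective F := by
        constructor
        · rintro ⟨⟨v, hv⟩, x, hx⟩ ⟨⟨v', hv'⟩, x', hx'⟩ h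
          simp only [hF, Subtype.mk.injEq] at h
          have h1 : v = v' := by
            have := congrArg Fin.init h
            rwa [Fin.init_snoc, Fin.init_snoc] at this
          subst h1
          have h2 : x = x' := by
            have := congrArg (fun f => f (Fin.last s)) h
            simpa [Fin.snoc_last] using this
          subst h2
          rfl
        · rintro ⟨u, hu⟩
          have h : LinearIndependent Fq (Fin.snoc (Fin.init u) (u (Fin.last s))) ↔
              LinearIndependent Fq (Fin.init u) ∧
                u (Fin.last s) ∉ Submodule.span Fq (Set.range (Fin.init u)) :=
            linearIndependent_fin_snoc
          rw [Fin.snoc_init_self] at h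
          exact ⟨⟨⟨Fin.init u, (h.mp hu).1⟩, ⟨u (Fin.last s), (h.mp hu).2⟩⟩,
            Subtype.ext (Fin.snoc_init_self u)⟩
      rw [← Nat.card_congr (Equiv.ofBijective F hbij)]
      rw [Nat.card_eq_fintype_card, Fintype.card_sigma]
      have hfib : ∀ t : {t : Fin s → V // LinearIndependent Fq t},
          Fintype.card {x : V // x ∉ Submodule.span Fq (Set.range t.1)} =
            Fintype.card Fq ^ Module.finrank Fq V - Fintype.card Fq ^ s := by
        intro t
        rw [Fintype.card_subtype_compl]
        congr 1
        · exact Module.card_eq_pow_finrank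
        · have h1 : Fintype.card {x : V // x ∈ Submodule.span Fq (Set.range t.1)} =
              Fintype.card (Submodule.span Fq (Set.range t.1)) := rfl
          rw [h1, Module.card_eq_pow_finrank (K := Fq), finrank_span_eq_card t.2,
            Fintype.card_fin]
      rw [Finset.sum_congr rfl (fun t _ => hfib t), Finset.sum_const, Finset.card_univ,
        smul_eq_mul, ← Nat.card_eq_fintype_card, ih hs',
        Finset.prod_range_succ, mul_comm]

/-- The number of linearly independent `s`-tuples with entries in a subspace `W`. -/
lemma card_li_tuples_in [FiniteDimensional Fq L] (W : Submodule Fq L) (s : ℕ)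
    (hs : s ≤ Module.finrank Fq W) :
    Nat.card {t : Fin s → L // LinearIndependent Fq t ∧ ∀ i, t i ∈ W} =
      ∏ i ∈ Finset.range s,
        (Fintype.card Fq ^ Module.finrank Fq W - Fintype.card Fq ^ i) := by
  classical
  haveI : Finite L := Module.finite_iff_finite.mp ‹_›
  have E : {t : Fin s → L // LinearIndependent Fq t ∧ ∀ i, t i ∈ W} ≃
      {t : Fin s → W // LinearIndependent Fq t} :=
    { toFun := fun t => ⟨fun i => ⟨t.1 i, t.2.2 i⟩, by
        apply LinearIndependent.of_comp W.subtype
        exact t.2.1⟩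
      invFun := fun u => ⟨fun i => (u.1 i : L),
        ⟨u.2.map' W.subtype (Submodule.ker_subtype W), fun i => (u.1 i).2⟩⟩
      left_inv := fun t => Subtype.ext rfl
      right_inv := fun u => Subtype.ext rfl }
  rw [Nat.card_congr E]
  exact card_li_tuples s hs

end Aux

/-- Bound I: lower bound on the list size of Gabidulin codes. For `Gab[n,k]` over `F_{q^m}`
with `n ≤ m` and `d = n - k + 1`, and any `τ < d`, there is a word `r ∈ F_{q^m}^n` such that
the number of codewords at rank distance exactly `τ` from `r` is at least
`[n choose n-τ]_q / (q^m)^{n-τ-k} ≥ q^m · q^{τ(m+n) - τ² - md}`. -/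
theorem gabidulin_list_size_lower_bound
    {Fq L : Type*} [Field Fq] [Fintype Fq] [Field L] [Algebra Fq L]
    {q m n k d τ : ℕ} (hq : q = Fintype.card Fq) (hm : Module.finrank Fq L = m)
    (hnm : n ≤ m) (hk : k ≤ n) (hd : d = n - k + 1) (hτ : τ < d)
    (α : Fin n → L) (hα : LinearIndependent Fq α) :
    ∃ r : Fin n → L,
      (∏ i ∈ Finset.range (n - τ), ((q : ℚ) ^ n - (q : ℚ) ^ i) / ((q : ℚ) ^ (n - τ) - (q : ℚ) ^ i))
          / ((q : ℚ) ^ m) ^ (n - τ - k) ≤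
        (Nat.card {c : Fin n → L //
            (∃ f : Fin k → L, c = gabCodeword q α f) ∧ vrank Fq (r - c) = τ} : ℚ) ∧
      (q : ℚ) ^ m * (q : ℚ) ^ (τ * (m + n)) / ((q : ℚ) ^ (τ ^ 2) * (q : ℚ) ^ (m * d)) ≤
        (Nat.card {c : Fin n → L //
            (∃ f : Fin k → L, c = gabCodeword q α f) ∧ vrank Fq (r - c) = τ} : ℚ) := by
  classical
  subst hq
  by_cases hm0 : m = 0
  · -- degenerate case
    have hn0 : n = 0 := by omega
    subst hn0
    have hk0 : k = 0 := by omega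
    subst hk0
    have hτ0 : τ = 0 := by omega
    subst hτ0
    refine ⟨0, ?_⟩
    have hcard1 : Nat.card {c : Fin 0 → L //
        (∃ f : Fin 0 → L, c = gabCodeword (Fintype.card Fq) α f) ∧ vrank Fq (0 - c) = 0} = 1 := by
      haveI : Nonempty {c : Fin 0 → L //
          (∃ f : Fin 0 → L, c = gabCodeword (Fintype.card Fq) α f) ∧ vrank Fq (0 - c) = 0} :=
        ⟨⟨0, ⟨0, funext fun j => j.elim0⟩, by
          rw [vrank, Set.range_eq_empty, Submodule.span_empty, finrank_bot]⟩⟩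
      haveI : Subsingleton {c : Fin 0 → L //
          (∃ f : Fin 0 → L, c = gabCodeword (Fintype.card Fq) α f) ∧ vrank Fq (0 - c) = 0} :=
        ⟨fun a b => Subtype.ext (Subsingleton.elim _ _)⟩
      exact Nat.card_unique
    rw [hcard1]
    subst hm0
    norm_num
  -- main case
  haveI : FiniteDimensional Fq L := FiniteDimensional.of_finrank_pos (by omega)
  haveI : Finite L := Module.finite_iff_finite.mp ‹_›
  letI : Fintype L := Fintype.ofFinite L
  have hq2 : 2 ≤ Fintype.card Fq := Fintype.one_lt_card
  have hq0 : 0 < Fintype.card Fq := by omega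
  set qQ : ℚ := (Fintype.card Fq : ℚ) with hqQ
  have hq1Q : (1 : ℚ) < qQ := by rw [hqQ]; exact_mod_cast hq2
  have hq0Q : (0 : ℚ) < qQ := by linarith
  have hτk : τ ≤ n - k := by omega
  set s := n - τ with hs
  have hks : k ≤ s := by omega
  have hsn : s ≤ n := by omega
  have hsτ : s + τ = n := by omega
  set A := Submodule.span Fq (Set.range α) with hA
  have hAn : Module.finrank Fq A = n := by
    rw [hA, finrank_span_eq_card hα, Fintype.card_fin]
  -- the annihilator coefficients
  set csub : Submodule Fq L → (Fin s → L) := fun U =>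
    if h : Module.finrank Fq U = s then Classical.choose (exists_kill_coeffs s U h) else 0
    with hcsubdef
  have hcsub : ∀ (U : Submodule Fq L) (h : Module.finrank Fq U = s),
      ∀ x ∈ U, qMap Fq s (csub U) x = 0 := by
    intro U h
    rw [hcsubdef]
    simp only [dif_pos h]
    exact Classical.choose_spec (exists_kill_coeffs s U h)
  -- the big finset of tuples
  set T : Finset (Fin s → L) :=
    Finset.univ.filter (fun t => LinearIndependent Fq t ∧ ∀ i, t i ∈ A) with hT
  have hTcard : T.card =
      ∏ i ∈ Finset.range s, (Fintype.card Fq ^ n - Fintype.card Fq ^ i) := by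
    have h1 : T.card = Fintype.card
        {t : Fin s → L // LinearIndependent Fq t ∧ ∀ i, t i ∈ A} :=
      (Fintype.card_subtype _).symm
    have h2 := card_li_tuples_in (Fq := Fq) A s (le_of_le_of_eq hsn hAn.symm)
    rw [hAn] at h2
    rw [h1, ← Nat.card_eq_fintype_card, h2]
  -- facts about members of T
  have hmemT : ∀ t ∈ T, LinearIndependent Fq t ∧ ∀ i, t i ∈ A := by
    intro t ht
    exact (Finset.mem_filter.mp ht).2
  have hUt : ∀ t ∈ T, Module.finrank Fq (Submodule.span Fq (Set.range t)) = s := by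
    intro t ht
    rw [finrank_span_eq_card (hmemT t ht).1, Fintype.card_fin]
  have hUtA : ∀ t ∈ T, Submodule.span Fq (Set.range t) ≤ A := by
    intro t ht
    rw [Submodule.span_le]
    rintro x ⟨i, rfl⟩
    exact (hmemT t ht).2 i
  -- the fiber map
  set F : (Fin s → L) → (Fin (s - k) → L) := fun t => fun jj =>
    csub (Submodule.span Fq (Set.range t)) ⟨k + (jj : ℕ), by omega⟩ with hF
  obtain ⟨g₀, -, hg₀⟩ := Finset.exists_max_image (Finset.univ : Finset (Fin (s - k) → L))
    (fun g => (T.filter (fun t => F t = g)).card) Finset.univ_nonempty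
  set fib : Finset (Fin s → L) := T.filter (fun t => F t = g₀) with hfib
  have hTle : T.card ≤ (Fintype.card Fq ^ m) ^ (s - k) * fib.card := by
    have h1 : T.card = ∑ g ∈ (Finset.univ : Finset (Fin (s - k) → L)),
        (T.filter (fun t => F t = g)).card :=
      Finset.card_eq_sum_card_fiberwise (fun x _ => Finset.mem_univ _)
    have h2 : ∑ g ∈ (Finset.univ : Finset (Fin (s - k) → L)),
        (T.filter (fun t => F t = g)).card ≤
        ∑ _g ∈ (Finset.univ : Finset (Fin (s - k) → L)), fib.card :=
      Finset.sum_le_sum (fun g _ => hg₀ g (Finset.mem_univ g))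
    rw [h1]
    apply le_trans h2
    rw [Finset.sum_const, Finset.card_univ, smul_eq_mul, Fintype.card_fun, Fintype.card_fin]
    apply Nat.mul_le_mul_right
    rw [Module.card_eq_pow_finrank (K := Fq) (V := L), hm]
  -- the received word
  set r : Fin n → L := fun j => α j ^ (Fintype.card Fq) ^ s +
    ∑ jj : Fin (s - k), g₀ jj * α j ^ (Fintype.card Fq) ^ (k + (jj : ℕ)) with hr
  -- the codeword map
  set G : (Fin s → L) → (Fin n → L) := fun t =>
    gabCodeword (Fintype.card Fq) α
      (fun i : Fin k => -(csub (Submodule.span Fq (Set.range t)) (Fin.castLE hks i)))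
    with hG
  -- sum splitting
  have hsplit : ∀ (cc : Fin s → L) (x : L),
      ∑ i : Fin s, cc i * x ^ (Fintype.card Fq) ^ (i : ℕ) =
        (∑ i : Fin k, cc (Fin.castLE hks i) * x ^ (Fintype.card Fq) ^ (i : ℕ)) +
        ∑ jj : Fin (s - k), cc ⟨k + (jj : ℕ), by omega⟩ *
          x ^ (Fintype.card Fq) ^ (k + (jj : ℕ)) := by
    intro cc x
    set gg : ℕ → L := fun i =>
      if h : i < s then cc ⟨i, h⟩ * x ^ (Fintype.card Fq) ^ i else 0 with hgg
    have e1 : ∑ i : Fin s, cc i * x ^ (Fintype.card Fq) ^ (i : ℕ) =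
        ∑ i ∈ Finset.range s, gg i := by
      rw [← Fin.sum_univ_eq_sum_range]
      apply Finset.sum_congr rfl
      intro i _
      rw [hgg]
      simp only [dif_pos i.isLt, Fin.eta]
    have e2 : ∑ i : Fin k, cc (Fin.castLE hks i) * x ^ (Fintype.card Fq) ^ (i : ℕ) =
        ∑ i ∈ Finset.range k, gg i := by
      rw [← Fin.sum_univ_eq_sum_range]
      apply Finset.sum_congr rfl
      intro i _
      rw [hgg]
      simp only [dif_pos (lt_of_lt_of_le i.isLt hks)]
      rfl
    have e3 : ∑ jj : Fin (s - k), cc ⟨k + (jj : ℕ), by omega⟩ *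
          x ^ (Fintype.card Fq) ^ (k + (jj : ℕ)) =
        ∑ jj ∈ Finset.range (s - k), gg (k + jj) := by
      rw [← Fin.sum_univ_eq_sum_range (fun j => gg (k + j))]
      apply Finset.sum_congr rfl
      intro jj _
      rw [hgg]
      have hlt : k + (jj : ℕ) < s := by omega
      simp only [dif_pos hlt]
    rw [e1, e2, e3, ← Finset.sum_Ico_eq_sum_range, Finset.range_eq_Ico,
      ← Finset.sum_Ico_consecutive gg (Nat.zero_le k) hks, ← Finset.range_eq_Ico]
  -- key facts about members of fib
  have hGfib : ∀ t ∈ fib, r - G t =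
      (fun j => qMap Fq s (csub (Submodule.span Fq (Set.range t))) (α j)) := by
    intro t ht
    obtain ⟨htT, htF⟩ := Finset.mem_filter.mp ht
    funext j
    rw [Pi.sub_apply, qMap_apply, hsplit (csub (Submodule.span Fq (Set.range t))) (α j)]
    have htl : ∑ jj : Fin (s - k),
        csub (Submodule.span Fq (Set.range t)) ⟨k + (jj : ℕ), by omega⟩ *
          α j ^ (Fintype.card Fq) ^ (k + (jj : ℕ)) =
        ∑ jj : Fin (s - k), g₀ jj * α j ^ (Fintype.card Fq) ^ (k + (jj : ℕ)) := by
      apply Finset.sum_congr rfl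
      intro jj _
      rw [show csub (Submodule.span Fq (Set.range t)) ⟨k + (jj : ℕ), by omega⟩ = g₀ jj from
        congrFun htF jj]
    rw [htl]
    simp only [hr, hG, gabCodeword, neg_mul, Finset.sum_neg_distrib]
    ring
  have hGrank : ∀ t ∈ fib, vrank Fq (r - G t) = τ := by
    intro t ht
    obtain ⟨htT, -⟩ := Finset.mem_filter.mp ht
    rw [hGfib t ht]
    exact vrank_qMap α hα hsτ _ _ (hUtA t htT) (hUt t htT) (hcsub _ (hUt t htT))
  -- the target property
  set P : (Fin n → L) → Prop := fun c =>
    (∃ f : Fin k → L, c = gabCodeword (Fintype.card Fq) α f) ∧ vrank Fq (r - c) = τ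
    with hP
  have himg : ∀ t ∈ fib, P (G t) := by
    intro t ht
    exact ⟨⟨_, rfl⟩, hGrank t ht⟩
  have himg_le : (fib.image G).card ≤ (Finset.univ.filter P).card := by
    apply Finset.card_le_card
    intro b hb
    obtain ⟨t, ht, rfl⟩ := Finset.mem_image.mp hb
    exact Finset.mem_filter.mpr ⟨Finset.mem_univ _, himg t ht⟩
  -- coefficients of members of the same G-fiber agree
  have hcoefeq : ∀ t ∈ fib, ∀ t' ∈ fib, G t = G t' →
      csub (Submodule.span Fq (Set.range t)) = csub (Submodule.span Fq (Set.range t')) := by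
    intro t ht t' ht' hGeq
    obtain ⟨htT, htF⟩ := Finset.mem_filter.mp ht
    obtain ⟨htT', htF'⟩ := Finset.mem_filter.mp ht'
    -- heads agree by coefficient injectivity on A
    have hvan : ∀ x ∈ A, ∑ i : Fin k,
        (csub (Submodule.span Fq (Set.range t)) (Fin.castLE hks i) -
          csub (Submodule.span Fq (Set.range t')) (Fin.castLE hks i)) *
          x ^ (Fintype.card Fq) ^ (i : ℕ) = 0 := by
      rw [hA]
      apply qpoly_vanish_on_span
      intro j
      have hj := congrFun hGeq j
      simp only [hG, gabCodeword, neg_mul, Finset.sum_neg_distrib, neg_inj] at hj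
      simp only [sub_mul, Finset.sum_sub_distrib, hj, sub_self]
    have hzero := qpoly_vanish A (le_of_le_of_eq hk hAn.symm)
      (fun i : Fin k => csub (Submodule.span Fq (Set.range t)) (Fin.castLE hks i) -
        csub (Submodule.span Fq (Set.range t')) (Fin.castLE hks i)) hvan
    have hheads : ∀ i : Fin k,
        csub (Submodule.span Fq (Set.range t)) (Fin.castLE hks i) =
          csub (Submodule.span Fq (Set.range t')) (Fin.castLE hks i) := by
      intro i
      have := congrFun hzero i
      simpa [sub_eq_zero] using this
    funext i
    by_cases hik : (i : ℕ) < k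
    · have hieq : i = Fin.castLE hks ⟨(i : ℕ), hik⟩ := Fin.ext (by simp)
      calc csub (Submodule.span Fq (Set.range t)) i
          = csub (Submodule.span Fq (Set.range t)) (Fin.castLE hks ⟨(i : ℕ), hik⟩) := by
            rw [← hieq]
        _ = csub (Submodule.span Fq (Set.range t')) (Fin.castLE hks ⟨(i : ℕ), hik⟩) :=
            hheads ⟨(i : ℕ), hik⟩
        _ = csub (Submodule.span Fq (Set.range t')) i := by rw [← hieq]
    · have hjj : (i : ℕ) - k < s - k := by omega
      have hie : i = (⟨k + ((i : ℕ) - k), by omega⟩ : Fin s) := by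
        apply Fin.ext
        simp only []
        omega
      have e1' : csub (Submodule.span Fq (Set.range t)) ⟨k + ((i : ℕ) - k), by omega⟩ =
          g₀ ⟨(i : ℕ) - k, hjj⟩ := congrFun htF ⟨(i : ℕ) - k, hjj⟩
      have e2' : csub (Submodule.span Fq (Set.range t')) ⟨k + ((i : ℕ) - k), by omega⟩ =
          g₀ ⟨(i : ℕ) - k, hjj⟩ := congrFun htF' ⟨(i : ℕ) - k, hjj⟩
      calc csub (Submodule.span Fq (Set.range t)) i
          = csub (Submodule.span Fq (Set.range t)) ⟨k + ((i : ℕ) - k), by omega⟩ := by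
            rw [← hie]
        _ = g₀ ⟨(i : ℕ) - k, hjj⟩ := e1'
        _ = csub (Submodule.span Fq (Set.range t')) ⟨k + ((i : ℕ) - k), by omega⟩ := e2'.symm
        _ = csub (Submodule.span Fq (Set.range t')) i := by rw [← hie]
  -- fibers of G on fib are small
  set D : ℕ := ∏ i ∈ Finset.range s, (Fintype.card Fq ^ s - Fintype.card Fq ^ i) with hD
  have hfiber_le : ∀ b ∈ fib.image G, (fib.filter (fun t => G t = b)).card ≤ D := by
    intro b hb
    obtain ⟨t₀, ht₀, rfl⟩ := Finset.mem_image.mp hb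
    obtain ⟨ht₀T, -⟩ := Finset.mem_filter.mp ht₀
    have hsubU : fib.filter (fun t => G t = G t₀) ⊆
        Finset.univ.filter (fun t' => LinearIndependent Fq t' ∧
          ∀ i, t' i ∈ Submodule.span Fq (Set.range t₀)) := by
      intro t' ht'
      obtain ⟨ht'f, ht'G⟩ := Finset.mem_filter.mp ht'
      obtain ⟨ht'T, -⟩ := Finset.mem_filter.mp ht'f
      have hceq := hcoefeq t' ht'f t₀ ht₀ ht'G
      have hkereq : Submodule.span Fq (Set.range t') = Submodule.span Fq (Set.range t₀) := by
        rw [← ker_qMap_eq s (csub (Submodule.span Fq (Set.range t')))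
            (Submodule.span Fq (Set.range t')) (hUt t' ht'T) (hcsub _ (hUt t' ht'T)),
          hceq,
          ker_qMap_eq s (csub (Submodule.span Fq (Set.range t₀)))
            (Submodule.span Fq (Set.range t₀)) (hUt t₀ ht₀T) (hcsub _ (hUt t₀ ht₀T))]
      apply Finset.mem_filter.mpr
      refine ⟨Finset.mem_univ _, (hmemT t' ht'T).1, ?_⟩
      intro i
      rw [← hkereq]
      exact Submodule.subset_span ⟨i, rfl⟩
    apply le_trans (Finset.card_le_card hsubU)
    have hc : (Finset.univ.filter
        (fun t' : Fin s → L => LinearIndependent Fq t' ∧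
          ∀ i, t' i ∈ Submodule.span Fq (Set.range t₀))).card =
        Nat.card {t' : Fin s → L // LinearIndependent Fq t' ∧
          ∀ i, t' i ∈ Submodule.span Fq (Set.range t₀)} := by
      rw [Nat.card_eq_fintype_card, Fintype.card_subtype]
    have hc2 := card_li_tuples_in (Fq := Fq) (Submodule.span Fq (Set.range t₀)) s
      (le_of_eq (hUt t₀ ht₀T).symm)
    rw [hUt t₀ ht₀T] at hc2
    rw [hc, hc2, hD]
  have hDN : fib.card ≤ D * (fib.image G).card :=
    Finset.card_le_mul_card_image fib D hfiber_le
  -- the natural-number chain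
  set Ncard : ℕ := (Finset.univ.filter P).card with hNcard
  have hchain : ∏ i ∈ Finset.range s, (Fintype.card Fq ^ n - Fintype.card Fq ^ i) ≤
      (Fintype.card Fq ^ m) ^ (s - k) * (D * Ncard) := by
    rw [← hTcard]
    apply le_trans hTle
    apply Nat.mul_le_mul_left
    apply le_trans hDN
    apply Nat.mul_le_mul_left
    exact himg_le
  have hNc : Nat.card {c : Fin n → L //
      (∃ f : Fin k → L, c = gabCodeword (Fintype.card Fq) α f) ∧ vrank Fq (r - c) = τ} =
      Ncard := by
    rw [Nat.card_eq_fintype_card]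
    exact Fintype.card_subtype _
  -- positivity and casts
  have hbpos : ∀ i ∈ Finset.range s, (0:ℚ) < qQ ^ s - qQ ^ i := by
    intro i hi
    have : qQ ^ i < qQ ^ s := pow_lt_pow_right₀ hq1Q (Finset.mem_range.mp hi)
    linarith
  have hbQ : (0:ℚ) < ∏ i ∈ Finset.range s, (qQ ^ s - qQ ^ i) := Finset.prod_pos hbpos
  have hQQ : (0:ℚ) < (qQ ^ m) ^ (s - k) := by positivity
  have hcast1 : ((∏ i ∈ Finset.range s,
      (Fintype.card Fq ^ n - Fintype.card Fq ^ i) : ℕ) : ℚ) =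
      ∏ i ∈ Finset.range s, (qQ ^ n - qQ ^ i) := by
    rw [Nat.cast_prod]
    apply Finset.prod_congr rfl
    intro i hi
    have hle : Fintype.card Fq ^ i ≤ Fintype.card Fq ^ n :=
      Nat.pow_le_pow_right hq0 (by have := Finset.mem_range.mp hi; omega)
    rw [Nat.cast_sub hle]
    push_cast [hqQ]
    ring
  have hcast2 : ((D : ℕ) : ℚ) = ∏ i ∈ Finset.range s, (qQ ^ s - qQ ^ i) := by
    rw [hD, Nat.cast_prod]
    apply Finset.prod_congr rfl
    intro i hi
    have hle : Fintype.card Fq ^ i ≤ Fintype.card Fq ^ s :=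
      Nat.pow_le_pow_right hq0 (le_of_lt (Finset.mem_range.mp hi))
    rw [Nat.cast_sub hle]
    push_cast [hqQ]
    ring
  have hcast3 : (((Fintype.card Fq ^ m) ^ (s - k) : ℕ) : ℚ) = (qQ ^ m) ^ (s - k) := by
    push_cast [hqQ]
    ring
  have hchainQ : ∏ i ∈ Finset.range s, (qQ ^ n - qQ ^ i) ≤
      (qQ ^ m) ^ (s - k) * ((∏ i ∈ Finset.range s, (qQ ^ s - qQ ^ i)) * (Ncard : ℚ)) := by
    have hcQ := (Nat.cast_le (α := ℚ)).mpr hchain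
    rw [hcast1, Nat.cast_mul, Nat.cast_mul, hcast2, hcast3] at hcQ
    exact hcQ
  have hmain : (∏ i ∈ Finset.range s, (qQ ^ n - qQ ^ i) / (qQ ^ s - qQ ^ i)) /
      (qQ ^ m) ^ (s - k) ≤ (Ncard : ℚ) := by
    rw [Finset.prod_div_distrib, div_div, div_le_iff₀ (mul_pos hbQ hQQ)]
    calc ∏ i ∈ Finset.range s, (qQ ^ n - qQ ^ i)
        ≤ (qQ ^ m) ^ (s - k) * ((∏ i ∈ Finset.range s, (qQ ^ s - qQ ^ i)) * (Ncard : ℚ)) :=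
          hchainQ
      _ = (Ncard : ℚ) * ((∏ i ∈ Finset.range s, (qQ ^ s - qQ ^ i)) * (qQ ^ m) ^ (s - k)) := by
          ring
  refine ⟨r, ?_, ?_⟩
  · rw [hNc]
    exact hmain
  · rw [hNc]
    have step1 : qQ ^ m * qQ ^ (τ * (m + n)) / (qQ ^ (τ ^ 2) * qQ ^ (m * d)) ≤
        qQ ^ (τ * s) / (qQ ^ m) ^ (s - k) := by
      rw [div_le_div_iff₀ (by positivity) (by positivity)]
      apply le_of_eq
      have hE : m + τ * (m + n) + m * (s - k) = τ * s + (τ ^ 2 + m * d) := by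
        obtain ⟨e, hes⟩ : ∃ e, s - k = e := ⟨s - k, rfl⟩
        have h1 : s = k + e := by omega
        have h2 : n = k + e + τ := by omega
        have h3 : d = e + τ + 1 := by omega
        rw [hes, h1, h2, h3]
        ring
      calc qQ ^ m * qQ ^ (τ * (m + n)) * (qQ ^ m) ^ (s - k)
          = qQ ^ (m + τ * (m + n) + m * (s - k)) := by
            rw [← pow_mul, ← pow_add, ← pow_add]
        _ = qQ ^ (τ * s + (τ ^ 2 + m * d)) := by rw [hE]
        _ = qQ ^ (τ * s) * (qQ ^ (τ ^ 2) * qQ ^ (m * d)) := by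
            rw [pow_add, pow_add]
    have step2 : qQ ^ (τ * s) ≤
        ∏ i ∈ Finset.range s, (qQ ^ n - qQ ^ i) / (qQ ^ s - qQ ^ i) := by
      have hconst : (∏ _i ∈ Finset.range s, qQ ^ τ) = qQ ^ (τ * s) := by
        rw [Finset.prod_const, Finset.card_range, ← pow_mul]
      rw [← hconst]
      apply Finset.prod_le_prod
      · intro i _
        positivity
      · intro i hi
        rw [le_div_iff₀ (hbpos i hi)]
        have e1 : qQ ^ τ * qQ ^ s = qQ ^ n := by
          rw [← pow_add]
          congr 1
          omega
        have e2 : qQ ^ i ≤ qQ ^ τ * qQ ^ i := by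
          have h1 : (1:ℚ) ≤ qQ ^ τ := one_le_pow₀ (le_of_lt hq1Q)
          nlinarith [pow_pos hq0Q i]
        rw [mul_sub, e1]
        linarith
    have step3 : qQ ^ (τ * s) / (qQ ^ m) ^ (s - k) ≤
        (∏ i ∈ Finset.range s, (qQ ^ n - qQ ^ i) / (qQ ^ s - qQ ^ i)) /
          (qQ ^ m) ^ (s - k) := by
      rw [div_le_div_iff₀ hQQ hQQ]
      exact mul_le_mul_of_nonneg_right step2 hQQ.le
    exact le_trans step1 (le_trans step3 hmain)
end

section
/- Upper bound on the list size (Bound II): For any rank-metric code C of length n ≤ m over F_{q^m} with minimum rank distance d, and any ⌊(d−1)/2⌋ ≤ τ < d, the number of codewords within rank distance τ of any word r ∈ F_{q^m}^n is at most 1 + Σ_{t=⌊(d−1)/2⌋+1}^{τ} [n choose 2t+1−d]_q / [t choose 2t+1−d]_q. -/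
/-- The Gaussian binomial coefficient `[n choose r]_q` as a rational number. -/
def gaussBinomQ (q n r : ℕ) : ℚ :=
  ∏ i ∈ Finset.range r, ((q : ℚ) ^ n - (q : ℚ) ^ i) / ((q : ℚ) ^ r - (q : ℚ) ^ i)

open Module Submodule

section Counting
variable {K V : Type*} [Field K] [Fintype K] [AddCommGroup V] [Module K V]
  [FiniteDimensional K V]

lemma natcard_compl_submodule (W : Submodule K V) :
    Nat.card {v : V // v ∉ W} =
      Fintype.card K ^ finrank K V - Fintype.card K ^ finrank K W := by
  classical
  haveI : Finite V := Module.finite_of_finite K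
  haveI : Fintype V := Fintype.ofFinite V
  rw [Nat.card_eq_fintype_card]
  have h1 : Fintype.card V = Fintype.card K ^ finrank K V := card_eq_pow_finrank (K := K)
  have h2 : Fintype.card W = Fintype.card K ^ finrank K W := card_eq_pow_finrank (K := K)
  rw [Fintype.card_subtype_compl, h1]
  congr 1
  all_goals rw [← h2]; exact Fintype.card_congr (Equiv.refl _)

lemma card_li (k : ℕ) :
    Nat.card {f : Fin k → V // LinearIndependent K f}
      = ∏ i ∈ Finset.range k,
          (Fintype.card K ^ finrank K V - Fintype.card K ^ i) := by
  induction k with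
  | zero =>
      simp only [Finset.range_zero, Finset.prod_empty]
      refine Nat.card_eq_one_iff_unique.mpr ⟨⟨fun a b => Subtype.ext (funext fun i => i.elim0)⟩,
        ⟨⟨fun i => i.elim0, linearIndependent_empty_type⟩⟩⟩
  | succ k ih =>
      classical
      haveI : Finite V := Module.finite_of_finite K
      haveI : Fintype V := Fintype.ofFinite V
      have e : {f : Fin (k+1) → V // LinearIndependent K f}
          ≃ (g : {f : Fin k → V // LinearIndependent K f}) ×
              {v : V // v ∉ span K (Set.range g.1)} :=
        { toFun := fun f =>
            ⟨⟨Fin.tail f.1, (linearIndependent_fin_cons.mp (by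
                  rw [Fin.cons_self_tail]; exact f.2)).1⟩,
              ⟨f.1 0, (linearIndependent_fin_cons.mp (by
                  rw [Fin.cons_self_tail]; exact f.2)).2⟩⟩
          invFun := fun gv =>
            ⟨Fin.cons gv.2.1 gv.1.1, linearIndependent_fin_cons.mpr ⟨gv.1.2, gv.2.2⟩⟩
          left_inv := fun f => Subtype.ext (Fin.cons_self_tail f.1)
          right_inv := fun gv => rfl }
      rw [Nat.card_congr e, Nat.card_eq_fintype_card, Fintype.card_sigma]
      have hterm : ∀ g : {f : Fin k → V // LinearIndependent K f},
          Fintype.card {v : V // v ∉ span K (Set.range g.1)}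
            = Fintype.card K ^ finrank K V - Fintype.card K ^ k := by
        intro g
        rw [← Nat.card_eq_fintype_card, natcard_compl_submodule,
          finrank_span_eq_card g.2, Fintype.card_fin]
      rw [Finset.sum_congr rfl (fun g _ => hterm g), Finset.sum_const, Finset.card_univ,
        smul_eq_mul, ← Nat.card_eq_fintype_card, ih, Finset.prod_range_succ]

lemma card_li_span (k : ℕ) (W : Submodule K V) (hW : finrank K W = k) :
    Nat.card {f : Fin k → V // LinearIndependent K f ∧ span K (Set.range f) = W}
      = ∏ i ∈ Finset.range k, (Fintype.card K ^ k - Fintype.card K ^ i) := by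
  have e : {f : Fin k → V // LinearIndependent K f ∧ span K (Set.range f) = W}
      ≃ {f : Fin k → W // LinearIndependent K f} :=
    { toFun := fun f => ⟨fun i => ⟨f.1 i, by
          have h : f.1 i ∈ span K (Set.range f.1) := subset_span (Set.mem_range_self i)
          rwa [f.2.2] at h⟩,
        LinearIndependent.of_comp W.subtype f.2.1⟩
      invFun := fun g => ⟨fun i => (g.1 i : V), by
        have hli : LinearIndependent K (fun i => ((g.1 i : V))) :=
          g.2.map' W.subtype (Submodule.ker_subtype W)
        have hle : span K (Set.range fun i => ((g.1 i : V))) ≤ W := by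
          rw [span_le]; rintro _ ⟨i, rfl⟩; exact (g.1 i).2
        refine ⟨hli, Submodule.eq_of_le_of_finrank_le hle ?_⟩
        rw [finrank_span_eq_card hli, Fintype.card_fin, hW]⟩
      left_inv := fun f => rfl
      right_inv := fun g => rfl }
  rw [Nat.card_congr e, card_li (V := W) k, hW]

lemma card_subspaces_mul (k : ℕ) :
    Nat.card {W : Submodule K V // finrank K W = k}
        * ∏ i ∈ Finset.range k, (Fintype.card K ^ k - Fintype.card K ^ i)
      = ∏ i ∈ Finset.range k, (Fintype.card K ^ finrank K V - Fintype.card K ^ i) := by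
  classical
  haveI : Finite V := Module.finite_of_finite K
  haveI : Fintype V := Fintype.ofFinite V
  haveI : Finite (Submodule K V) :=
    Finite.of_injective (fun W : Submodule K V => (W : Set V)) SetLike.coe_injective
  haveI : Fintype (Submodule K V) := Fintype.ofFinite _
  have e : {f : Fin k → V // LinearIndependent K f}
      ≃ (W : {W : Submodule K V // finrank K W = k}) ×
          {f : Fin k → V // LinearIndependent K f ∧ span K (Set.range f) = W.1} :=
    { toFun := fun f => ⟨⟨span K (Set.range f.1), by
          rw [finrank_span_eq_card f.2, Fintype.card_fin]⟩, ⟨f.1, f.2, rfl⟩⟩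
      invFun := fun Wf => ⟨Wf.2.1, Wf.2.2.1⟩
      left_inv := fun f => rfl
      right_inv := fun Wf => by
        obtain ⟨⟨W, hW⟩, f, hf, hsp⟩ := Wf
        refine Sigma.ext (Subtype.ext hsp) ?_
        refine (Subtype.heq_iff_coe_eq ?_).mpr rfl
        intro g
        dsimp only
        rw [hsp] }
  have h := card_li (K := K) (V := V) k
  rw [Nat.card_congr e, Nat.card_eq_fintype_card, Fintype.card_sigma] at h
  have hfib : ∀ W : {W : Submodule K V // finrank K W = k},
      Fintype.card {f : Fin k → V // LinearIndependent K f ∧ span K (Set.range f) = W.1}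
        = ∏ i ∈ Finset.range k, (Fintype.card K ^ k - Fintype.card K ^ i) := fun W => by
    rw [← Nat.card_eq_fintype_card, card_li_span k W.1 W.2]
  rw [Finset.sum_congr rfl (fun W _ => hfib W), Finset.sum_const, Finset.card_univ,
    smul_eq_mul, ← Nat.card_eq_fintype_card] at h
  exact h

lemma anticode_bound {ι : Type*} [Finite ι] {t k : ℕ} (S : ι → Submodule K V)
    (hS : ∀ i, finrank K (S i) = t)
    (hint : ∀ i j, i ≠ j → finrank K ((S i) ⊓ (S j) : Submodule K V) < k) :
    Nat.card ι * ∏ i ∈ Finset.range k, (Fintype.card K ^ t - Fintype.card K ^ i)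
      ≤ ∏ i ∈ Finset.range k, (Fintype.card K ^ finrank K V - Fintype.card K ^ i) := by
  classical
  haveI : Fintype ι := Fintype.ofFinite ι
  haveI : Finite V := Module.finite_of_finite K
  haveI : Fintype V := Fintype.ofFinite V
  haveI : Finite (Submodule K V) :=
    Finite.of_injective (fun W : Submodule K V => (W : Set V)) SetLike.coe_injective
  have cardfib : ∀ i : ι,
      Nat.card {W : Submodule K V // finrank K W = k ∧ W ≤ S i}
        * ∏ j ∈ Finset.range k, (Fintype.card K ^ k - Fintype.card K ^ j)
      = ∏ j ∈ Finset.range k, (Fintype.card K ^ t - Fintype.card K ^ j) := by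
    intro i
    have e : {U : Submodule K (S i) // finrank K U = k}
        ≃ {W : Submodule K V // finrank K W = k ∧ W ≤ S i} :=
      { toFun := fun U => ⟨U.1.map (S i).subtype,
          by rw [Submodule.finrank_map_subtype_eq]; exact U.2,
          Submodule.map_subtype_le _ _⟩
        invFun := fun W => ⟨W.1.comap (S i).subtype, by
          have hmap : (W.1.comap (S i).subtype).map (S i).subtype = W.1 := by
            rw [Submodule.map_comap_subtype, inf_eq_right.mpr W.2.2]
          have := Submodule.finrank_map_subtype_eq (S i) (W.1.comap (S i).subtype)
          rw [hmap] at this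
          rw [← this]; exact W.2.1⟩
        left_inv := fun U => Subtype.ext (Submodule.comap_map_eq_of_injective
          (Submodule.injective_subtype (S i)) U.1)
        right_inv := fun W => Subtype.ext (by
          simp only
          rw [Submodule.map_comap_subtype, inf_eq_right.mpr W.2.2]) }
    rw [← Nat.card_congr e]
    have h := card_subspaces_mul (K := K) (V := (S i)) k
    rw [hS i] at h
    exact h
  have hinj : Function.Injective
      (fun p : (i : ι) × {W : Submodule K V // finrank K W = k ∧ W ≤ S i} =>
        (⟨p.2.1, p.2.2.1⟩ : {W : Submodule K V // finrank K W = k})) := by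
    rintro ⟨i, W, hWk, hWS⟩ ⟨j, W', hWk', hWS'⟩ h
    simp only [Subtype.mk.injEq] at h
    subst h
    have hij : i = j := by
      by_contra hij
      have h1 : W ≤ S i ⊓ S j := le_inf hWS hWS'
      have h2 : finrank K W ≤ finrank K ((S i) ⊓ (S j) : Submodule K V) := by
        have := Submodule.finrank_mono h1
        simpa using this
      have := hint i j hij
      omega
    subst hij
    rfl
  have hle : Nat.card ((i : ι) × {W : Submodule K V // finrank K W = k ∧ W ≤ S i})
      ≤ Nat.card {W : Submodule K V // finrank K W = k} :=
    Nat.card_le_card_of_injective _ hinj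
  have hsum : Nat.card ((i : ι) × {W : Submodule K V // finrank K W = k ∧ W ≤ S i})
      = ∑ i : ι, Nat.card {W : Submodule K V // finrank K W = k ∧ W ≤ S i} := by
    rw [Nat.card_eq_fintype_card, Fintype.card_sigma]
    exact Finset.sum_congr rfl fun i _ => (Nat.card_eq_fintype_card).symm
  calc Nat.card ι * ∏ i ∈ Finset.range k, (Fintype.card K ^ t - Fintype.card K ^ i)
      = ∑ _i : ι, ∏ j ∈ Finset.range k, (Fintype.card K ^ t - Fintype.card K ^ j) := by
        rw [Finset.sum_const, Finset.card_univ, smul_eq_mul, Nat.card_eq_fintype_card]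
    _ = ∑ i : ι, Nat.card {W : Submodule K V // finrank K W = k ∧ W ≤ S i}
          * ∏ j ∈ Finset.range k, (Fintype.card K ^ k - Fintype.card K ^ j) :=
        Finset.sum_congr rfl fun i _ => (cardfib i).symm
    _ = (∑ i : ι, Nat.card {W : Submodule K V // finrank K W = k ∧ W ≤ S i})
          * ∏ j ∈ Finset.range k, (Fintype.card K ^ k - Fintype.card K ^ j) := by
        rw [Finset.sum_mul]
    _ ≤ Nat.card {W : Submodule K V // finrank K W = k}
          * ∏ j ∈ Finset.range k, (Fintype.card K ^ k - Fintype.card K ^ j) :=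
        Nat.mul_le_mul_right _ (hsum ▸ hle)
    _ = ∏ j ∈ Finset.range k, (Fintype.card K ^ finrank K V - Fintype.card K ^ j) :=
        card_subspaces_mul k

lemma prodQ_pos {q k s : ℕ} (hq : 2 ≤ q) (hk : k ≤ s) :
    0 < ∏ i ∈ Finset.range k, ((q : ℚ) ^ s - (q : ℚ) ^ i) := by
  apply Finset.prod_pos
  intro i hi
  rw [Finset.mem_range] at hi
  have : (q : ℚ) ^ i < (q : ℚ) ^ s := by
    apply pow_lt_pow_right₀
    · exact_mod_cast hq
    · omega
  linarith

lemma prodQ_cast {q k s : ℕ} (hq : 2 ≤ q) (hk : k ≤ s) :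
    ((∏ i ∈ Finset.range k, (q ^ s - q ^ i) : ℕ) : ℚ)
      = ∏ i ∈ Finset.range k, ((q : ℚ) ^ s - (q : ℚ) ^ i) := by
  rw [Nat.cast_prod]
  apply Finset.prod_congr rfl
  intro i hi
  rw [Finset.mem_range] at hi
  have : q ^ i ≤ q ^ s := Nat.pow_le_pow_right (by omega) (by omega)
  push_cast [Nat.cast_sub this]
  ring

lemma gaussBinomQ_eq (q s k : ℕ) :
    gaussBinomQ q s k = (∏ i ∈ Finset.range k, ((q : ℚ) ^ s - (q : ℚ) ^ i))
      / (∏ i ∈ Finset.range k, ((q : ℚ) ^ k - (q : ℚ) ^ i)) := by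
  rw [gaussBinomQ, Finset.prod_div_distrib]

lemma anticode_boundQ {ι : Type*} [Finite ι] {t k : ℕ}
    (hk : k ≤ t) (ht : t ≤ finrank K V)
    (S : ι → Submodule K V) (hS : ∀ i, finrank K (S i) = t)
    (hint : ∀ i j, i ≠ j → finrank K ((S i) ⊓ (S j) : Submodule K V) < k) :
    (Nat.card ι : ℚ) ≤ gaussBinomQ (Fintype.card K) (finrank K V) k
        / gaussBinomQ (Fintype.card K) t k := by
  set q := Fintype.card K with hqdef
  have hq : 2 ≤ q := Fintype.one_lt_card
  have hN := anticode_bound S hS hint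
  set N := finrank K V with hN'
  have hkN : k ≤ N := le_trans hk ht
  have hPt : 0 < ∏ i ∈ Finset.range k, ((q : ℚ) ^ t - (q : ℚ) ^ i) := prodQ_pos hq hk
  have hPk : 0 < ∏ i ∈ Finset.range k, ((q : ℚ) ^ k - (q : ℚ) ^ i) := prodQ_pos hq le_rfl
  have hcast : (Nat.card ι : ℚ) * ∏ i ∈ Finset.range k, ((q : ℚ) ^ t - (q : ℚ) ^ i)
      ≤ ∏ i ∈ Finset.range k, ((q : ℚ) ^ N - (q : ℚ) ^ i) := by
    rw [← prodQ_cast hq hk, ← prodQ_cast hq hkN, ← Nat.cast_mul]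
    exact_mod_cast hN
  rw [gaussBinomQ_eq, gaussBinomQ_eq, div_div_div_cancel_right₀]
  · rw [le_div_iff₀ hPt]
    exact hcast
  · exact ne_of_gt hPk

end Counting

section Supp
variable (Fq : Type*) [Field Fq] {L : Type*} [Field L] [Algebra Fq L] {n : ℕ}

/-- The "row space" of a vector: range of the dual of the linear-combination map. -/
noncomputable def suppD (v : Fin n → L) : Submodule Fq (Module.Dual Fq (Fin n → Fq)) :=
  LinearMap.range (Fintype.linearCombination Fq v).dualMap

variable [FiniteDimensional Fq L]

omit [FiniteDimensional Fq L] in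
lemma finrank_suppD (v : Fin n → L) : finrank Fq (suppD Fq v) = vrank Fq v := by
  rw [suppD, LinearMap.finrank_range_dualMap_eq_finrank_range,
    Fintype.range_linearCombination, vrank]

omit [FiniteDimensional Fq L] in
lemma suppD_sub_le (u v : Fin n → L) : suppD Fq (u - v) ≤ suppD Fq u ⊔ suppD Fq v := by
  have hφ : (Fintype.linearCombination Fq (u - v))
      = Fintype.linearCombination Fq u - Fintype.linearCombination Fq v :=
    LinearMap.ext fun w => by
      simp [Fintype.linearCombination_apply, smul_sub, Finset.sum_sub_distrib]
  rintro x ⟨f, rfl⟩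
  have : ((Fintype.linearCombination Fq (u - v)).dualMap) f
      = ((Fintype.linearCombination Fq u).dualMap) f
        - ((Fintype.linearCombination Fq v).dualMap) f := by
    ext w
    simp [LinearMap.dualMap_apply', hφ]
  rw [this]
  exact Submodule.sub_mem _ (Submodule.mem_sup_left ⟨f, rfl⟩)
    (Submodule.mem_sup_right ⟨f, rfl⟩)

lemma vrank_sub_le (u v : Fin n → L) :
    vrank Fq (u - v) ≤ vrank Fq u + vrank Fq v := by
  have hle : Submodule.span Fq (Set.range (u - v))
      ≤ Submodule.span Fq (Set.range u) ⊔ Submodule.span Fq (Set.range v) := by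
    rw [Submodule.span_le]
    rintro _ ⟨i, rfl⟩
    exact Submodule.sub_mem _
      (Submodule.mem_sup_left (Submodule.subset_span (Set.mem_range_self i)))
      (Submodule.mem_sup_right (Submodule.subset_span (Set.mem_range_self i)))
  have h1 := Submodule.finrank_mono hle
  have h2 := Submodule.finrank_sup_add_finrank_inf_eq
    (Submodule.span Fq (Set.range u)) (Submodule.span Fq (Set.range v))
  unfold vrank
  omega

end Supp

/-- Bound II: upper bound on the list size. For any rank-metric code `C ⊆ F_{q^m}^n`
(`n ≤ m`) with minimum rank distance `d`, and any `⌊(d-1)/2⌋ ≤ τ < d`, the number of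
codewords within rank distance `τ` of any word `r` is at most
`1 + ∑_{t=⌊(d-1)/2⌋+1}^{τ} [n choose 2t+1-d]_q / [t choose 2t+1-d]_q`. -/
theorem list_size_upper_bound
    {Fq L : Type*} [Field Fq] [Fintype Fq] [Field L] [Algebra Fq L]
    {q m n d τ : ℕ} (hq : q = Fintype.card Fq) (hm : Module.finrank Fq L = m)
    (hnm : n ≤ m) (hdn : d ≤ n)
    (C : Set (Fin n → L))
    (hC : ∀ c₁ ∈ C, ∀ c₂ ∈ C, c₁ ≠ c₂ → d ≤ vrank Fq (c₁ - c₂))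
    (hτlo : (d - 1) / 2 ≤ τ) (hτhi : τ < d) :
    ∀ r : Fin n → L,
      (Nat.card {c : Fin n → L // c ∈ C ∧ vrank Fq (r - c) ≤ τ} : ℚ) ≤
        1 + ∑ t ∈ Finset.Icc ((d - 1) / 2 + 1) τ,
              gaussBinomQ q n (2 * t + 1 - d) / gaussBinomQ q t (2 * t + 1 - d) := by
  intro r
  classical
  by_cases hfd : FiniteDimensional Fq L
  swap
  · exfalso
    have h0 : Module.finrank Fq L = 0 := Module.finrank_of_not_finite hfd
    rw [h0] at hm
    omega
  haveI := hfd
  haveI : Finite L := Module.finite_of_finite Fq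
  haveI : Fintype L := Fintype.ofFinite L
  subst hq
  set e := (d - 1) / 2 with he
  set A : Finset (Fin n → L) :=
    Finset.univ.filter (fun c => c ∈ C ∧ vrank Fq (r - c) ≤ τ) with hA
  have hcard : Nat.card {c : Fin n → L // c ∈ C ∧ vrank Fq (r - c) ≤ τ} = A.card := by
    rw [Nat.card_eq_fintype_card, Fintype.card_subtype]
  rw [hcard]
  have hmemA : ∀ c, c ∈ A ↔ c ∈ C ∧ vrank Fq (r - c) ≤ τ := by
    intro c
    simp [hA]
  have hsplit : A.card = (A.filter fun c => vrank Fq (r - c) ≤ e).card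
      + ∑ t ∈ Finset.Icc (e+1) τ, (A.filter fun c => vrank Fq (r - c) = t).card := by
    rw [← Finset.card_filter_add_card_filter_not
      (p := fun c => vrank Fq (r - c) ≤ e)]
    congr 1
    rw [Finset.card_eq_sum_card_fiberwise
      (f := fun c => vrank Fq (r - c)) (t := Finset.Icc (e+1) τ) ?_]
    · apply Finset.sum_congr rfl
      intro t ht
      rw [Finset.mem_Icc] at ht
      congr 1
      ext c
      simp only [Finset.mem_filter]
      constructor
      · rintro ⟨⟨h1, _⟩, h3⟩; exact ⟨h1, h3⟩
      · rintro ⟨h1, h3⟩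
        exact ⟨⟨h1, by omega⟩, h3⟩
    · intro c hc
      simp only [Finset.coe_filter, Set.mem_setOf_eq] at hc
      have hcτ := ((hmemA c).mp hc.1).2
      have hce := hc.2
      rw [Finset.mem_coe, Finset.mem_Icc]
      simp only
      omega
  have huniq : (A.filter fun c => vrank Fq (r - c) ≤ e).card ≤ 1 := by
    rw [Finset.card_le_one]
    intro a ha b hb
    by_contra hne
    rw [Finset.mem_filter] at ha hb
    obtain ⟨haA, hae⟩ := ha
    obtain ⟨hbA, hbe⟩ := hb
    have hd : d ≤ vrank Fq (a - b) := hC a ((hmemA a).mp haA).1 b ((hmemA b).mp hbA).1 hne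
    have hab : a - b = (r - b) - (r - a) := by ring
    rw [hab] at hd
    have htri := vrank_sub_le Fq (r - b) (r - a)
    omega
  have hclass : ∀ t ∈ Finset.Icc (e+1) τ,
      ((A.filter fun c => vrank Fq (r - c) = t).card : ℚ)
        ≤ gaussBinomQ (Fintype.card Fq) n (2*t+1-d)
            / gaussBinomQ (Fintype.card Fq) t (2*t+1-d) := by
    intro t ht
    rw [Finset.mem_Icc] at ht
    set k := 2*t+1-d with hk
    set B := A.filter fun c => vrank Fq (r - c) = t with hB
    have hcardB : (B.card : ℚ) = (Nat.card {c : Fin n → L // c ∈ B} : ℚ) := by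
      rw [Nat.card_eq_fintype_card, Fintype.card_coe]
    rw [hcardB]
    have hmemB : ∀ c, c ∈ B → c ∈ C ∧ vrank Fq (r - c) = t := by
      intro c hc
      rw [hB, Finset.mem_filter] at hc
      exact ⟨((hmemA c).mp hc.1).1, hc.2⟩
    have hdim : finrank Fq (Module.Dual Fq (Fin n → Fq)) = n := by
      rw [Subspace.dual_finrank_eq, Module.finrank_fintype_fun_eq_card, Fintype.card_fin]
    have hbd := anticode_boundQ (K := Fq) (V := Module.Dual Fq (Fin n → Fq))
      (ι := {c : Fin n → L // c ∈ B}) (t := t) (k := k)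
      (by omega) (by rw [hdim]; omega)
      (fun c => suppD Fq (r - c.1))
      (fun c => by rw [finrank_suppD]; exact (hmemB c.1 c.2).2)
      ?_
    · rw [hdim] at hbd
      exact hbd
    · intro c₁ c₂ hne
      have h1 := hmemB c₁.1 c₁.2
      have h2 := hmemB c₂.1 c₂.2
      have hnev : c₁.1 ≠ c₂.1 := fun h => hne (Subtype.ext h)
      have hd : d ≤ vrank Fq (c₁.1 - c₂.1) := hC _ h1.1 _ h2.1 hnev
      have hab : c₁.1 - c₂.1 = (r - c₂.1) - (r - c₁.1) := by ring
      rw [hab] at hd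
      have hd2 : d ≤ finrank Fq (suppD Fq ((r - c₂.1) - (r - c₁.1))) := by
        rw [finrank_suppD]; exact hd
      have hd3 := le_trans hd2
        (Submodule.finrank_mono (suppD_sub_le Fq (r - c₂.1) (r - c₁.1)))
      have hsupinf := Submodule.finrank_sup_add_finrank_inf_eq
        (suppD Fq (r - c₁.1)) (suppD Fq (r - c₂.1))
      have hd4 : d ≤ finrank Fq (suppD Fq (r - c₁.1) ⊔ suppD Fq (r - c₂.1) :
          Submodule Fq (Module.Dual Fq (Fin n → Fq))) := by
        rwa [sup_comm] at hd3
      have e1 : finrank Fq (suppD Fq (r - c₁.1)) = t := by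
        rw [finrank_suppD]; exact h1.2
      have e2 : finrank Fq (suppD Fq (r - c₂.1)) = t := by
        rw [finrank_suppD]; exact h2.2
      omega
  calc (A.card : ℚ)
      = ((A.filter fun c => vrank Fq (r - c) ≤ e).card : ℚ)
        + ∑ t ∈ Finset.Icc (e+1) τ, ((A.filter fun c => vrank Fq (r - c) = t).card : ℚ) := by
        rw [hsplit]; push_cast; ring
    _ ≤ 1 + ∑ t ∈ Finset.Icc (e+1) τ,
          gaussBinomQ (Fintype.card Fq) n (2*t+1-d)
            / gaussBinomQ (Fintype.card Fq) t (2*t+1-d) := by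
        apply add_le_add
        · exact_mod_cast huniq
        · exact Finset.sum_le_sum hclass
end

section
/- Lower bound on the worst-case list size of rank-metric codes (Bound III): Let ⌊(d−1)/2⌋ + 1 ≤ τ < d ≤ n ≤ m and τ ≤ n − τ. Then there exists a (possibly nonlinear) rank-metric code C ⊆ F_{q^m}^n with minimum rank distance at least d and a word r ∈ F_{q^m}^n such that the number of codewords of C within rank distance τ of r is at least q^{(n−τ)(τ−⌊(d−1)/2⌋)}. -/
open Polynomial Module Submodule LinearMap Finset

section Helpers

variable {F : Type*} [Field F] {V : Type*} {W : Type*}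
  [AddCommGroup V] [Module F V] [AddCommGroup W] [Module F W]

/-- `finrank` of `comap S.subtype p` is at most `finrank p`. -/
lemma finrank_comap_subtype_le [FiniteDimensional F W] (S p : Submodule F W) :
    finrank F (comap S.subtype p) ≤ finrank F p := by
  have h : ∀ x ∈ comap S.subtype p, S.subtype x ∈ p := fun x hx => hx
  have hinj : Function.Injective (S.subtype.restrict h) := by
    intro x y hxy
    have h2 : (S.subtype.restrict h x : W) = (S.subtype.restrict h y : W) :=
      congrArg Subtype.val hxy
    simp only [LinearMap.restrict_apply, Submodule.coe_subtype] at h2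
    exact Subtype.ext (Subtype.ext h2)
  exact LinearMap.finrank_le_finrank_of_injective hinj

/-- Rank–nullity style inequality for the image of a submodule. -/
lemma finrank_le_finrank_map_add_finrank_ker [FiniteDimensional F V] [FiniteDimensional F W]
    (f : V →ₗ[F] W) (S : Submodule F V) :
    finrank F S ≤ finrank F (S.map f) + finrank F (ker f) := by
  have h := LinearMap.finrank_range_add_finrank_ker (f.domRestrict S)
  rw [range_domRestrict] at h
  have h2 : finrank F (ker (f.domRestrict S)) ≤ finrank F (ker f) := by
    have : ker (f.domRestrict S) = comap S.subtype (ker f) := by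
      ext x; simp [mem_ker, mem_comap]
    rw [this]
    exact finrank_comap_subtype_le _ _
  omega

/-- `finrank` of the image of a submodule under an injective map. -/
lemma finrank_map_of_injective [FiniteDimensional F V] {f : V →ₗ[F] W}
    (hf : Function.Injective f) (S : Submodule F V) :
    finrank F (S.map f) = finrank F S :=
  (LinearEquiv.finrank_eq (Submodule.equivMapOfInjective f hf S)).symm

/-- Key rank bound: `rank (φ - ψ) ≥ dim φ(ker ψ) + rank ψ - dim (im φ ⊓ im ψ)`. -/
lemma finrank_range_sub_ge [FiniteDimensional F V] [FiniteDimensional F W]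
    (φ ψ : V →ₗ[F] W) :
    finrank F ((ker ψ).map φ) + finrank F (range ψ)
      ≤ finrank F (range (φ - ψ)) + finrank F (range φ ⊓ range ψ : Submodule F W) := by
  set X := range (φ - ψ)
  set I := range φ
  set J := range ψ
  have e1 : finrank F (X ⊔ I : Submodule F W) + finrank F (X ⊓ I : Submodule F W)
      = finrank F X + finrank F I := finrank_sup_add_finrank_inf_eq X I
  have e2 : finrank F (J ⊔ I : Submodule F W) + finrank F (J ⊓ I : Submodule F W)
      = finrank F J + finrank F I := finrank_sup_add_finrank_inf_eq J I
  have e3 : X ⊔ I = J ⊔ I := by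
    apply le_antisymm
    · refine sup_le ?_ le_sup_right
      rintro x ⟨v, rfl⟩
      simp only [LinearMap.sub_apply]
      exact sub_mem (mem_sup_right ⟨v, rfl⟩) (mem_sup_left ⟨v, rfl⟩)
    · refine sup_le ?_ le_sup_right
      rintro x ⟨v, rfl⟩
      have : ψ v = φ v - (φ - ψ) v := by simp
      rw [this]
      exact sub_mem (mem_sup_right ⟨v, rfl⟩) (mem_sup_left ⟨v, rfl⟩)
  have e4 : (ker ψ).map φ ≤ X ⊓ I := by
    refine le_inf ?_ (map_le_range)
    rintro x ⟨v, hv, rfl⟩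
    have hv' : ψ v = 0 := hv
    exact ⟨v, by simp [hv']⟩
  have e5 : finrank F ((ker ψ).map φ) ≤ finrank F (X ⊓ I : Submodule F W) :=
    Submodule.finrank_mono e4
  have e6 : finrank F (J ⊓ I : Submodule F W) = finrank F (I ⊓ J : Submodule F W) := by
    rw [inf_comm]
  rw [e3] at e1
  omega

end Helpers

section ExtField

universe u

variable (Fq : Type u) [Field Fq] [Fintype Fq]

/-- There is a field extension of `Fq` of any prescribed finite degree `N ≠ 0`. -/
theorem exists_finite_ext (N : ℕ) (hN : N ≠ 0) :
    ∃ (K : Type u) (_ : Field K) (_ : Algebra Fq K), Module.finrank Fq K = N := by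
  classical
  set q := Fintype.card Fq with hq
  have hq1 : 1 < q := Fintype.one_lt_card
  set P : Fq[X] := X ^ q ^ N - X with hP
  refine ⟨P.SplittingField, inferInstance, inferInstance, ?_⟩
  set K := P.SplittingField
  haveI : Finite K := inferInstance
  haveI : Fintype K := Fintype.ofFinite K
  set p := ringChar Fq with hp
  haveI : CharP Fq p := ringChar.charP Fq
  have hprime : p.Prime := CharP.char_is_prime Fq p
  haveI : Fact p.Prime := ⟨hprime⟩
  obtain ⟨e, -, hqe⟩ := FiniteField.card Fq p
  have hpq : p ∣ q := by rw [hq, hqe]; exact dvd_pow_self p e.pos.ne'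
  have sep : P.Separable := galois_poly_separable p (q ^ N) (hpq.trans (dvd_pow_self q hN))
  have hsplits := SplittingField.splits P
  have hPne : P ≠ 0 := FiniteField.X_pow_card_pow_sub_X_ne_zero Fq hN hq1
  have hdeg : P.natDegree = q ^ N := FiniteField.X_pow_card_pow_sub_X_natDegree_eq Fq hN hq1
  have key : Fintype.card (P.rootSet K) = q ^ N := by
    rw [card_rootSet_eq_natDegree sep hsplits, hdeg]
  have hqNe : q ^ N = p ^ ((e : ℕ) * N) := by rw [hq, hqe, ← pow_mul]
  have hfix : ∀ x : K, x ^ q ^ N = x := by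
    intro x
    have hx : x ∈ Algebra.adjoin Fq (P.rootSet K) := by
      rw [IsSplittingField.adjoin_rootSet]; exact Algebra.mem_top
    induction hx using Algebra.adjoin_induction with
    | mem y hy =>
      rw [mem_rootSet] at hy
      have := hy.2
      simp only [hP, map_sub, map_pow, aeval_X, sub_eq_zero] at this
      exact this
    | algebraMap r => rw [← map_pow, hq, FiniteField.pow_card_pow]
    | add y z hy hz ihy ihz => rw [hqNe, add_pow_char_pow y z p ((e : ℕ) * N), ← hqNe, ihy, ihz]
    | mul y z hy hz ihy ihz => rw [mul_pow, ihy, ihz]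
  have huniv : P.rootSet K = Set.univ := by
    refine Set.eq_univ_of_forall fun x => ?_
    rw [mem_rootSet]
    refine ⟨hPne, ?_⟩
    simp only [hP, map_sub, map_pow, aeval_X, sub_eq_zero]
    exact hfix x
  have cardK : Fintype.card K = q ^ N := by
    rw [← key]
    exact (Fintype.card_congr ((Equiv.setCongr huniv).trans (Equiv.Set.univ K))).symm
  have : Fintype.card K = q ^ Module.finrank Fq K := card_eq_pow_finrank
  rw [this] at cardK
  exact Nat.pow_right_injective hq1 cardK

end ExtField

section Gadget

variable (Fq : Type*) [Field Fq] [Fintype Fq]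
variable (K : Type*) [Field K] [Algebra Fq K]

/-- The `Fq`-linear map `x ↦ ∑ i, c i * x ^ q ^ i` on `K` (a linearized polynomial). -/
noncomputable def evLin {s : ℕ} (c : Fin s → K) : K →ₗ[Fq] K where
  toFun x := ∑ i : Fin s, c i * x ^ Fintype.card Fq ^ (i : ℕ)
  map_add' x y := by
    set p := ringChar Fq with hp
    haveI : CharP Fq p := ringChar.charP Fq
    haveI : Fact p.Prime := ⟨CharP.char_is_prime Fq p⟩
    haveI : CharP K p := charP_of_injective_algebraMap (algebraMap Fq K).injective p
    obtain ⟨e, -, hqe⟩ := FiniteField.card Fq p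
    have hpow : ∀ i : ℕ, Fintype.card Fq ^ i = p ^ ((e : ℕ) * i) := by
      intro i; rw [hqe, ← pow_mul]
    rw [← Finset.sum_add_distrib]
    refine Finset.sum_congr rfl fun i _ => ?_
    rw [hpow, add_pow_char_pow x y p ((e : ℕ) * (i : ℕ)), mul_add]
  map_smul' r x := by
    simp only [RingHom.id_apply]
    rw [Finset.smul_sum]
    refine Finset.sum_congr rfl fun i _ => ?_
    rw [Algebra.smul_def, Algebra.smul_def, mul_pow, ← map_pow,
      FiniteField.pow_card_pow, mul_left_comm]

lemma evLin_sub {s : ℕ} (c c' : Fin s → K) :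
    evLin Fq K (c - c') = evLin Fq K c - evLin Fq K c' := by
  ext x
  simp only [evLin, LinearMap.coe_mk, AddHom.coe_mk, LinearMap.sub_apply, Pi.sub_apply,
    ← Finset.sum_sub_distrib, sub_mul]

/-- A nonzero linearized polynomial with `s` coefficients has kernel of dimension `≤ s - 1`. -/
lemma evLin_ker_finrank_le [FiniteDimensional Fq K] {s : ℕ} (c : Fin s → K) (hc : c ≠ 0) :
    finrank Fq (ker (evLin Fq K c)) ≤ s - 1 := by
  classical
  haveI : Finite K := Module.finite_of_finite Fq
  haveI : Fintype K := Fintype.ofFinite K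
  set q := Fintype.card Fq with hq
  have hq1 : 1 < q := Fintype.one_lt_card
  obtain ⟨j, hj⟩ : ∃ j, c j ≠ 0 := by
    by_contra h
    push_neg at h
    exact hc (funext h)
  have hs : 1 ≤ s := j.pos
  set P : K[X] := ∑ i : Fin s, C (c i) * X ^ q ^ (i : ℕ) with hP
  have hcoeff : P.coeff (q ^ (j : ℕ)) = c j := by
    rw [hP, finset_sum_coeff]
    have : ∀ i : Fin s, (C (c i) * X ^ q ^ (i : ℕ)).coeff (q ^ (j : ℕ))
        = if j = i then c i else 0 := by
      intro i
      rw [coeff_C_mul, coeff_X_pow]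
      by_cases h : j = i
      · simp [h]
      · have : q ^ (j : ℕ) ≠ q ^ (i : ℕ) := by
          intro hcon
          exact h (Fin.ext (Nat.pow_right_injective hq1 hcon))
        simp [this, h]
    rw [Finset.sum_congr rfl fun i _ => this i, Finset.sum_ite_eq Finset.univ j c]
    simp
  have hPne : P ≠ 0 := fun h => hj (by rw [← hcoeff, h, coeff_zero])
  have hdeg : P.natDegree ≤ q ^ (s - 1) := by
    refine natDegree_sum_le_of_forall_le _ _ fun i _ => ?_
    refine (natDegree_C_mul_le _ _).trans ?_
    rw [natDegree_X_pow]
    exact Nat.pow_le_pow_right (by omega) (by omega)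
  have hroot : ∀ x : K, x ∈ ker (evLin Fq K c) → x ∈ P.roots.toFinset := by
    intro x hx
    rw [Multiset.mem_toFinset, mem_roots hPne]
    have hx' : (evLin Fq K c) x = 0 := hx
    simp only [evLin, LinearMap.coe_mk, AddHom.coe_mk] at hx'
    rw [IsRoot.def, hP, eval_finset_sum]
    simpa using hx'
  have hcard : Nat.card (ker (evLin Fq K c)) ≤ q ^ (s - 1) := by
    have hinj : Function.Injective
        (fun x : ker (evLin Fq K c) => (⟨x.1, hroot x.1 x.2⟩ : P.roots.toFinset)) := by
      intro x y hxy
      have h2 : (x : K) = (y : K) := by simpa using Subtype.ext_iff.mp hxy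
      exact Subtype.ext h2
    refine (Nat.card_le_card_of_injective _ hinj).trans ?_
    rw [Nat.card_eq_fintype_card, Fintype.card_coe]
    exact (Multiset.toFinset_card_le _).trans ((Polynomial.card_roots' P).trans hdeg)
  have hker : Nat.card (ker (evLin Fq K c)) = q ^ finrank Fq (ker (evLin Fq K c)) := by
    rw [Nat.card_eq_fintype_card]
    exact card_eq_pow_finrank
  rw [hker] at hcard
  exact (Nat.pow_le_pow_iff_right hq1).mp hcard

end Gadget
section Construction

variable (Fq : Type*) [Field Fq] [Fintype Fq]
variable (K : Type*) [Field K] [Algebra Fq K]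
variable (L : Type*) [Field L] [Algebra Fq L]
variable (U W : Submodule Fq K) (hW : IsCompl U W)
variable (Θ : (↥U × K) →ₗ[Fq] L)
variable {s : ℕ}

/-- First building block: `π ∘ ev_c : K → U`. -/
noncomputable def Xm (c : Fin s → K) : K →ₗ[Fq] ↥U :=
  (U.linearProjOfIsCompl W hW) ∘ₗ evLin Fq K c

/-- `v_c(u, w) = u + π(ev_c w)`. -/
noncomputable def vm (c : Fin s → K) : (↥U × K) →ₗ[Fq] ↥U :=
  LinearMap.fst Fq ↥U K + (Xm Fq K U W hW c) ∘ₗ LinearMap.snd Fq ↥U K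

/-- `γ_c(u) = (u, ev_c u)`, the graph map. -/
noncomputable def gm (c : Fin s → K) : ↥U →ₗ[Fq] ↥U × K :=
  LinearMap.prod LinearMap.id ((evLin Fq K c) ∘ₗ U.subtype)

/-- The codeword map `E_c = Θ ∘ γ_c ∘ v_c`. -/
noncomputable def Em (c : Fin s → K) : (↥U × K) →ₗ[Fq] L :=
  (Θ ∘ₗ gm Fq K U c) ∘ₗ vm Fq K U W hW c

/-- `μ_c(w) = (-π(ev_c w), w)`, parametrizing `ker v_c`. -/
noncomputable def mm (c : Fin s → K) : K →ₗ[Fq] ↥U × K :=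
  LinearMap.prod (-(Xm Fq K U W hW c)) LinearMap.id

lemma gm_inj (c : Fin s → K) : Function.Injective (gm Fq K U c) := by
  intro u u' h
  have := congrArg Prod.fst h
  simpa [gm] using this

lemma mm_inj (c : Fin s → K) : Function.Injective (mm Fq K U W hW c) := by
  intro w w' h
  have := congrArg Prod.snd h
  simpa [mm] using this

lemma vm_surj (c : Fin s → K) : range (vm Fq K U W hW c) = ⊤ := by
  rw [eq_top_iff]
  rintro u -
  exact ⟨(u, 0), by simp [vm]⟩

lemma Em_range (c : Fin s → K) :
    range (Em Fq K L U W hW Θ c) = range (Θ ∘ₗ gm Fq K U c) :=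
  LinearMap.range_comp_of_range_eq_top _ (vm_surj Fq K U W hW c)

lemma Em_range_finrank (hΘ : Function.Injective Θ) [FiniteDimensional Fq K] (c : Fin s → K) :
    finrank Fq (range (Em Fq K L U W hW Θ c)) = finrank Fq U := by
  rw [Em_range]
  exact LinearMap.finrank_range_of_inj (hΘ.comp (gm_inj Fq K U c))

lemma ker_Em (hΘ : Function.Injective Θ) (c : Fin s → K) :
    ker (Em Fq K L U W hW Θ c) = range (mm Fq K U W hW c) := by
  have hι : Function.Injective (Θ ∘ₗ gm Fq K U c) := hΘ.comp (gm_inj Fq K U c)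
  ext x
  obtain ⟨u, w⟩ := x
  constructor
  · intro hx
    have hx' : (Θ ∘ₗ gm Fq K U c) (vm Fq K U W hW c (u, w)) = 0 := hx
    have h0 : vm Fq K U W hW c (u, w) = 0 := by
      apply hι
      rw [hx', map_zero]
    have h1 : u + Xm Fq K U W hW c w = 0 := by simpa [vm] using h0
    refine ⟨w, ?_⟩
    simp only [mm, LinearMap.prod_apply, LinearMap.neg_apply, LinearMap.id_coe, id_eq, Function.prod]
    have : -(Xm Fq K U W hW c w) = u := neg_eq_of_add_eq_zero_left h1
    rw [this]
  · rintro ⟨w', hw'⟩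
    have h1 : (-(Xm Fq K U W hW c) w', w') = (u, w) := hw'
    have hu : u = -(Xm Fq K U W hW c w) := by
      have h2 := congrArg Prod.fst h1
      have h3 := congrArg Prod.snd h1
      simp only at h2 h3
      rw [← h2, ← h3]
    show (Θ ∘ₗ gm Fq K U c) (vm Fq K U W hW c (u, w)) = 0
    have : vm Fq K U W hW c (u, w) = 0 := by
      simp [vm, hu]
    rw [this]
    simp

lemma Em_comp_mm (f g : Fin s → K) :
    (Em Fq K L U W hW Θ f) ∘ₗ (mm Fq K U W hW g)
      = (Θ ∘ₗ gm Fq K U f) ∘ₗ ((U.linearProjOfIsCompl W hW) ∘ₗ evLin Fq K (f - g)) := by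
  ext w
  simp only [LinearMap.comp_apply, Em, mm, vm, Xm, LinearMap.prod_apply, LinearMap.add_apply,
    LinearMap.fst_apply, LinearMap.snd_apply, LinearMap.neg_apply, LinearMap.id_coe, id_eq,
    Function.prod, evLin_sub, LinearMap.sub_apply, map_sub]
  rw [neg_add_eq_sub, map_sub, map_sub]

end Construction
section KeyLemma

variable (Fq : Type*) [Field Fq] [Fintype Fq]
variable (K : Type*) [Field K] [Algebra Fq K]
variable (L : Type*) [Field L] [Algebra Fq L]
variable (U W : Submodule Fq K) (hW : IsCompl U W)
variable (Θ : (↥U × K) →ₗ[Fq] L)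
variable {s : ℕ}

/-- The crucial distance bound: distinct codewords have rank distance at least `2τ + 2 - 2s`. -/
lemma Em_key (hΘ : Function.Injective Θ) [FiniteDimensional Fq K] [FiniteDimensional Fq L]
    {τ N : ℕ} (hU : finrank Fq U = τ) (hK : finrank Fq K = N)
    (hs1 : 1 ≤ s) (hsτ : s ≤ τ) (hτN : τ ≤ N)
    (f g : Fin s → K) (hfg : f ≠ g) :
    2 * τ + 2 ≤ finrank Fq (range (Em Fq K L U W hW Θ f - Em Fq K L U W hW Θ g)) + 2 * s := by
  have hι : Function.Injective (Θ ∘ₗ gm Fq K U f) := hΘ.comp (gm_inj Fq K U f)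
  set π : K →ₗ[Fq] ↥U := U.linearProjOfIsCompl W hW with hπ
  set h := f - g with hh
  have hne : h ≠ 0 := sub_ne_zero.mpr hfg
  have hkerh : finrank Fq (ker (evLin Fq K h)) ≤ s - 1 := evLin_ker_finrank_le Fq K h hne
  have hWdim : τ + finrank Fq W = N := by
    have := Submodule.finrank_add_eq_of_isCompl hW
    rw [hU, hK] at this
    exact this
  -- bracket 1 : the image of `ker (Em g)` under `Em f`
  have hmap : (ker (Em Fq K L U W hW Θ g)).map (Em Fq K L U W hW Θ f)
      = Submodule.map (Θ ∘ₗ gm Fq K U f) (range (π ∘ₗ evLin Fq K h)) := by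
    rw [ker_Em Fq K L U W hW Θ hΘ g, ← LinearMap.range_comp, Em_comp_mm,
      LinearMap.range_comp]
  have b1 : finrank Fq ((ker (Em Fq K L U W hW Θ g)).map (Em Fq K L U W hW Θ f))
      = finrank Fq (range (π ∘ₗ evLin Fq K h)) := by
    rw [hmap]
    exact finrank_map_of_injective hι _
  have r1 : finrank Fq (range (evLin Fq K h)) + finrank Fq (ker (evLin Fq K h)) = N := by
    rw [LinearMap.finrank_range_add_finrank_ker, hK]
  have r2 : finrank Fq (range (evLin Fq K h))
      ≤ finrank Fq ((range (evLin Fq K h)).map π) + finrank Fq (ker π) :=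
    finrank_le_finrank_map_add_finrank_ker π _
  have r3 : finrank Fq (ker π) = finrank Fq W := by
    rw [hπ, show ker (U.linearProjOfIsCompl W hW) = W from Submodule.ker_projectionOnto hW]
  have r4 : range (π ∘ₗ evLin Fq K h) = (range (evLin Fq K h)).map π :=
    LinearMap.range_comp _ _
  have b1' : τ + 1 ≤ finrank Fq ((ker (Em Fq K L U W hW Θ g)).map (Em Fq K L U W hW Θ f)) + s := by
    rw [b1, r4]
    omega
  -- bracket 2 : rank of `Em g`
  have b2 : finrank Fq (range (Em Fq K L U W hW Θ g)) = τ := by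
    rw [Em_range_finrank Fq K L U W hW Θ hΘ g, hU]
  -- the intersection of the two ranges
  have hint : range (Em Fq K L U W hW Θ f) ⊓ range (Em Fq K L U W hW Θ g)
      = Submodule.map Θ (range (gm Fq K U f) ⊓ range (gm Fq K U g)) := by
    rw [Em_range, Em_range, LinearMap.range_comp, LinearMap.range_comp,
      Submodule.map_inf Θ hΘ]
  have hintle : range (gm Fq K U f) ⊓ range (gm Fq K U g)
      ≤ Submodule.map (gm Fq K U f) (comap U.subtype (ker (evLin Fq K h))) := by
    rintro x ⟨hx1, hx2⟩
    obtain ⟨u, rfl⟩ := hx1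
    obtain ⟨u', hu'⟩ := hx2
    have h1 : (u' : ↥U) = u := by
      have := congrArg Prod.fst hu'
      simpa [gm] using this
    have h2 : evLin Fq K g (u : K) = evLin Fq K f (u : K) := by
      have := congrArg Prod.snd hu'
      rw [h1] at this
      simpa [gm] using this
    refine ⟨u, ?_, rfl⟩
    simp only [SetLike.mem_coe, Submodule.mem_comap, LinearMap.mem_ker, Submodule.coe_subtype]
    rw [hh, evLin_sub]
    simp [h2]
  have hintdim : finrank Fq (range (Em Fq K L U W hW Θ f) ⊓ range (Em Fq K L U W hW Θ g)
      : Submodule Fq L) ≤ s - 1 := by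
    rw [hint, finrank_map_of_injective hΘ]
    refine (Submodule.finrank_mono hintle).trans ?_
    refine (Submodule.finrank_map_le _ _).trans ?_
    exact (finrank_comap_subtype_le _ _).trans hkerh
  have main := finrank_range_sub_ge (Em Fq K L U W hW Θ f) (Em Fq K L U W hW Θ g)
  omega

end KeyLemma
/-- Bound III: lower bound on the worst-case list size of rank-metric codes. For
`⌊(d-1)/2⌋ + 1 ≤ τ < d ≤ n ≤ m` and `τ ≤ n - τ`, there exists a (possibly nonlinear)
rank-metric code `C ⊆ F_{q^m}^n` with minimum rank distance at least `d` and a word `r`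
such that the ball of rank radius `τ` around `r` contains at least
`q^{(n-τ)(τ - ⌊(d-1)/2⌋)}` codewords of `C`. -/
theorem list_size_lower_bound_rank_metric
    {Fq L : Type*} [Field Fq] [Fintype Fq] [Field L] [Algebra Fq L]
    {q m n d τ : ℕ} (hq : q = Fintype.card Fq) (hm : Module.finrank Fq L = m)
    (hτlo : (d - 1) / 2 + 1 ≤ τ) (hτd : τ < d) (hdn : d ≤ n) (hnm : n ≤ m)
    (hτn : τ ≤ n - τ) :
    ∃ C : Set (Fin n → L),
      (∀ c₁ ∈ C, ∀ c₂ ∈ C, c₁ ≠ c₂ → d ≤ vrank Fq (c₁ - c₂)) ∧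
      ∃ r : Fin n → L,
        q ^ ((n - τ) * (τ - (d - 1) / 2)) ≤
          Nat.card {c : Fin n → L // c ∈ C ∧ vrank Fq (r - c) ≤ τ} := by
  classical
  have hd2 : 2 ≤ d := by omega
  set t := (d - 1) / 2 with ht
  have htd : d ≤ 2 * t + 2 := by omega
  set s := τ - t with hs
  have hs1 : 1 ≤ s := by omega
  have hts : t + s = τ := by omega
  set N := n - τ with hN
  have hτN : τ ≤ N := hτn
  have hτn' : τ + N = n := by omega
  have hN0 : N ≠ 0 := by omega
  have hm0 : 0 < m := by omega
  haveI : FiniteDimensional Fq L := FiniteDimensional.of_finrank_pos (hm ▸ hm0)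
  haveI : Finite L := Module.finite_of_finite Fq
  have hq2 : 1 < q := hq ▸ Fintype.one_lt_card
  obtain ⟨K, _K1, _K2, hK⟩ := exists_finite_ext Fq N hN0
  haveI : FiniteDimensional Fq K := FiniteDimensional.of_finrank_pos (by omega)
  haveI : Finite K := Module.finite_of_finite Fq
  haveI : Fintype K := Fintype.ofFinite K
  -- a `τ`-dimensional subspace `U` of `K`
  let bK : Basis (Fin N) Fq K := Module.finBasisOfFinrankEq Fq K hK
  let u0 : Fin τ → K := fun i => bK (Fin.castLE hτN i)
  have hu0 : LinearIndependent Fq u0 :=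
    bK.linearIndependent.comp _ (Fin.castLE_injective hτN)
  set U : Submodule Fq K := Submodule.span Fq (Set.range u0) with hUdef
  have hU : finrank Fq U = τ := by rw [finrank_span_eq_card hu0]; simp
  obtain ⟨W, hW⟩ := Submodule.exists_isCompl U
  -- an injective linear map `Θ : U × K → L`
  have hVrank : finrank Fq (↥U × K) = n := by rw [Module.finrank_prod, hU, hK]; omega
  let bV : Basis (Fin n) Fq (↥U × K) := Module.finBasisOfFinrankEq Fq _ hVrank
  let bL : Basis (Fin m) Fq L := Module.finBasisOfFinrankEq Fq L hm
  let fam : Fin n → L := fun i => bL (Fin.castLE hnm i)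
  have hfam : LinearIndependent Fq fam :=
    bL.linearIndependent.comp _ (Fin.castLE_injective hnm)
  let Θ : (↥U × K) →ₗ[Fq] L := bV.constr Fq fam
  have hΘ : Function.Injective Θ := by
    rw [← LinearMap.ker_eq_bot, Submodule.eq_bot_iff]
    intro x hx
    have hx' : Θ x = 0 := hx
    rw [Basis.constr_apply] at hx'
    have hx2 : Finsupp.linearCombination Fq fam (bV.repr x) = 0 := by
      rw [Finsupp.linearCombination_apply]
      exact hx'
    have hrep : bV.repr x = 0 := linearIndependent_iff.mp hfam _ hx2
    have := bV.repr.map_eq_zero_iff.mp hrep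
    exact this
  -- the codewords
  let cw : (Fin s → K) → (Fin n → L) := fun c i => Em Fq K L U W hW Θ c (bV i)
  have hspan : ∀ (F : (↥U × K) →ₗ[Fq] L),
      Submodule.span Fq (Set.range (fun i => F (bV i))) = range F := by
    intro F
    have h1 : (fun i => F (bV i)) = F ∘ bV := rfl
    rw [h1, Set.range_comp, Submodule.span_image, Basis.span_eq, Submodule.map_top]
  have hdist : ∀ c c' : Fin s → K, c ≠ c' → d ≤ vrank Fq (cw c - cw c') := by
    intro c c' hne
    have key := Em_key Fq K L U W hW Θ hΘ hU hK hs1 (by omega) hτN c c' hne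
    have h1 : cw c - cw c'
        = fun i => (Em Fq K L U W hW Θ c - Em Fq K L U W hW Θ c') (bV i) := by
      funext i
      simp [cw]
    rw [vrank, h1, hspan]
    omega
  have hball : ∀ c : Fin s → K, vrank Fq ((0 : Fin n → L) - cw c) ≤ τ := by
    intro c
    have h1 : (0 : Fin n → L) - cw c = fun i => (-(Em Fq K L U W hW Θ c)) (bV i) := by
      funext i
      simp [cw]
    rw [vrank, h1, hspan, LinearMap.range_neg, Em_range_finrank Fq K L U W hW Θ hΘ, hU]
  have hcwinj : Function.Injective cw := by
    intro c c' hcc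
    by_contra hne
    have hd := hdist c c' hne
    rw [hcc, sub_self] at hd
    have h0 : vrank Fq (0 : Fin n → L) = 0 := by
      have hr0 : Submodule.span Fq (Set.range (0 : Fin n → L)) = ⊥ := by
        rw [Submodule.span_eq_bot]
        rintro x ⟨i, rfl⟩
        rfl
      rw [vrank, hr0, finrank_bot]
    omega
  refine ⟨Set.range cw, ?_, 0, ?_⟩
  · rintro c₁ ⟨c, rfl⟩ c₂ ⟨c', rfl⟩ hne
    exact hdist c c' fun h => hne (congrArg cw h)
  · have hinj2 : Function.Injective (fun c : Fin s → K =>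
        (⟨cw c, ⟨c, rfl⟩, hball c⟩ :
          {v : Fin n → L // v ∈ Set.range cw ∧ vrank Fq ((0 : Fin n → L) - v) ≤ τ})) := by
      intro c c' hcc
      exact hcwinj (congrArg Subtype.val hcc)
    have hcount := Nat.card_le_card_of_injective _ hinj2
    have hcardK : Nat.card K = q ^ N := by
      rw [Nat.card_eq_fintype_card, hq]
      rw [card_eq_pow_finrank (K := Fq) (V := K), hK]
    have hcardF : Nat.card (Fin s → K) = q ^ (N * s) := by
      rw [Nat.card_fun, hcardK, Nat.card_eq_fintype_card]
      simp [← pow_mul]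
    calc q ^ ((n - τ) * (τ - (d - 1) / 2)) = q ^ (N * s) := by rw [← hN, ← ht, ← hs]
      _ = Nat.card (Fin s → K) := hcardF.symm
      _ ≤ _ := hcount
end

section
/- Special case τ = ⌊(d−1)/2⌋ + 1: For n ≤ m, τ = ⌊(d−1)/2⌋ + 1 (and d ≤ n−1 if d is odd), there exists a rank-metric code C over F_{q^m} of length n with minimum rank distance at least d, and a word r, such that the ball of rank radius τ around r contains at least q^{n−τ} codewords of C. -/
open Polynomial

/-- An auxiliary field extension of `Fq` of degree `s`: the splitting field of
`X ^ (q ^ s) - X`. -/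
noncomputable def ExtField (Fq : Type*) [Field Fq] [Fintype Fq] (s : ℕ) : Type _ :=
  SplittingField (X ^ Fintype.card Fq ^ s - X : Fq[X])

noncomputable instance (Fq : Type*) [Field Fq] [Fintype Fq] (s : ℕ) :
    Field (ExtField Fq s) :=
  inferInstanceAs (Field (SplittingField _))

noncomputable instance (Fq : Type*) [Field Fq] [Fintype Fq] (s : ℕ) :
    Algebra Fq (ExtField Fq s) :=
  inferInstanceAs (Algebra Fq (SplittingField _))

instance (Fq : Type*) [Field Fq] [Fintype Fq] (s : ℕ) :
    FiniteDimensional Fq (ExtField Fq s) := by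
  dsimp only [ExtField]; exact (inferInstanceAs (FiniteDimensional Fq (SplittingField (X ^ Fintype.card Fq ^ s - X : Fq[X]))))

theorem splittingField_xqs_finrank (Fq : Type*) [Field Fq] [Fintype Fq] {s : ℕ}
    (hs : s ≠ 0) :
    Module.finrank Fq (X ^ Fintype.card Fq ^ s - X : Fq[X]).SplittingField = s := by
  classical
  set p := ringChar Fq with hpdef
  haveI : CharP Fq p := ringChar.charP Fq
  obtain ⟨e, hp, hq⟩ := FiniteField.card Fq p
  haveI := Fact.mk hp
  set g : Fq[X] := X ^ Fintype.card Fq ^ s - X with hgdef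
  haveI : CharP g.SplittingField p :=
    (Algebra.charP_iff Fq g.SplittingField p).mp ‹CharP Fq p›
  have hq1 : 1 < Fintype.card Fq := Fintype.one_lt_card
  have hqs1 : 1 < Fintype.card Fq ^ s := Nat.one_lt_pow hs hq1
  have aux : g ≠ 0 := FiniteField.X_pow_card_sub_X_ne_zero _ hqs1
  have hdeg : g.natDegree = Fintype.card Fq ^ s :=
    FiniteField.X_pow_card_sub_X_natDegree_eq _ hqs1
  have hqes : Fintype.card Fq ^ s = p ^ ((e : ℕ) * s) := by rw [hq, ← pow_mul]
  have hsep : g.Separable := by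
    have hdvd : p ∣ Fintype.card Fq ^ s := by
      rw [hqes]
      exact dvd_pow_self p (by positivity)
    exact galois_poly_separable p (Fintype.card Fq ^ s) hdvd
  haveI : Finite g.SplittingField := Module.finite_of_finite Fq
  haveI : Fintype g.SplittingField := Fintype.ofFinite _
  have key : Fintype.card (g.rootSet g.SplittingField) = g.natDegree :=
    card_rootSet_eq_natDegree hsep (SplittingField.splits g)
  rw [hdeg] at key
  have huniv : g.rootSet g.SplittingField = Set.univ := by
    rw [Set.eq_univ_iff_forall]
    suffices h : ∀ (x) (_ : x ∈ (⊤ : Subalgebra Fq g.SplittingField)),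
        x ∈ g.rootSet g.SplittingField by
      intro x; exact h x trivial
    rw [← SplittingField.adjoin_rootSet]
    simp_rw [Algebra.mem_adjoin_iff]
    intro x hx
    refine Subring.closure_induction ?_ ?_ ?_ ?_ ?_ ?_ hx <;>
      simp_rw [mem_rootSet_of_ne aux]
    · rintro x (⟨r, rfl⟩ | hx)
      · simp only [hgdef, map_sub, aeval_X_pow, aeval_X]
        rw [← map_pow, FiniteField.pow_card_pow, sub_self]
      · rwa [mem_rootSet_of_ne aux] at hx
    · simp only [hgdef, map_sub, aeval_X_pow, aeval_X]
      rw [zero_pow (pow_ne_zero s Fintype.card_ne_zero), sub_self]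
    · simp only [hgdef, map_sub, aeval_X_pow, aeval_X, one_pow, sub_self]
    · intro x y _ _ hx hy
      simp only [hgdef, map_sub, aeval_X_pow, aeval_X, sub_eq_zero] at hx hy ⊢
      rw [hqes, add_pow_char_pow, ← hqes, hx, hy]
    · intro x _ hx
      simp only [hgdef, map_sub, aeval_X_pow, aeval_X, sub_eq_zero] at hx ⊢
      rw [hqes, neg_pow, neg_one_pow_char_pow, ← hqes, hx]
      simp
    · intro x y _ _ hx hy
      simp only [hgdef, map_sub, aeval_X_pow, aeval_X, sub_eq_zero] at hx hy ⊢
      rw [mul_pow, hx, hy]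
  have key' : Nat.card (g.rootSet g.SplittingField) = Fintype.card Fq ^ s := by
    rw [Nat.card_eq_fintype_card, key]
  rw [huniv, Nat.card_univ] at key'
  have hcard : Fintype.card g.SplittingField = Fintype.card Fq ^ s := by
    rw [← Nat.card_eq_fintype_card, key']
  have h2 := Module.card_eq_pow_finrank (K := Fq) (V := g.SplittingField)
  rw [hcard] at h2
  exact Nat.pow_right_injective hq1 h2.symm

theorem ExtField.finrank_eq (Fq : Type*) [Field Fq] [Fintype Fq] {s : ℕ} (hs : s ≠ 0) :
    Module.finrank Fq (ExtField Fq s) = s :=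
  splittingField_xqs_finrank Fq hs

theorem basisConstr_injective {K M M' : Type*} [Field K] [AddCommGroup M] [Module K M]
    [AddCommGroup M'] [Module K M'] {ι : Type*} [Fintype ι] (b : Module.Basis ι K M)
    {f : ι → M'} (hf : LinearIndependent K f) :
    Function.Injective (b.constr K f) := by
  rw [← LinearMap.ker_eq_bot, Submodule.eq_bot_iff]
  intro x hx
  rw [LinearMap.mem_ker, Module.Basis.constr_apply_fintype] at hx
  have h2 := Fintype.linearIndependent_iff.mp hf (b.equivFun x) hx
  have h3 : b.equivFun x = 0 := funext h2
  have h4 := congrArg b.equivFun.symm h3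
  rwa [LinearEquiv.symm_apply_apply, map_zero] at h4

theorem vrank_of_map {Fq L : Type*} [Field Fq] [Field L] [Algebra Fq L]
    {D : Type*} [AddCommGroup D] [Module Fq D] {n : ℕ}
    (b : Module.Basis (Fin n) Fq D) (f : D →ₗ[Fq] L) :
    vrank Fq (fun i => f (b i)) = Module.finrank Fq (LinearMap.range f) := by
  unfold vrank
  have h : Set.range (fun i => f (b i)) = f '' Set.range b := by
    rw [← Set.range_comp]; rfl
  rw [h, Submodule.span_image, b.span_eq, Submodule.map_top]

/-- The core construction: given an auxiliary extension `F` of the right degree,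
produce a family of codewords of rank `≤ τ` whose pairwise differences have
rank at least `2 * τ`. -/
theorem exists_code_family {Fq L F : Type*} [Field Fq] [Fintype Fq] [Field L]
    [Algebra Fq L] [Field F] [Algebra Fq F] [FiniteDimensional Fq F]
    [FiniteDimensional Fq L] {n τ : ℕ} (hτ1 : 1 ≤ τ)
    (hτF : τ ≤ Module.finrank Fq F) (hn : n = τ + Module.finrank Fq F)
    (hnm : n ≤ Module.finrank Fq L) :
    ∃ c : F → (Fin n → L), Function.Injective c ∧
      (∀ a, vrank Fq ((0 : Fin n → L) - c a) ≤ τ) ∧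
      (∀ a b, a ≠ b → 2 * τ ≤ vrank Fq (c a - c b)) := by
  classical
  set s := Module.finrank Fq F with hsdef
  have hD : Module.finrank Fq ((Fin τ → Fq) × F) = n := by
    rw [Module.finrank_prod, Module.finrank_pi, Fintype.card_fin, ← hsdef, hn]
  let bD : Module.Basis (Fin n) Fq ((Fin τ → Fq) × F) :=
    (Module.finBasis Fq _).reindex (finCongr hD)
  let bF : Module.Basis (Fin s) Fq F := (Module.finBasis Fq F).reindex (finCongr rfl)
  let bL : Module.Basis (Fin (Module.finrank Fq L)) Fq L :=
    (Module.finBasis Fq L).reindex (finCongr rfl)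
  let e : (Fin τ → Fq) →ₗ[Fq] F :=
    (Pi.basisFun Fq (Fin τ)).constr Fq fun i => bF (Fin.castLE hτF i)
  have he : Function.Injective e :=
    basisConstr_injective _ (bF.linearIndependent.comp _ (Fin.castLE_injective hτF))
  obtain ⟨π, hπ⟩ := e.exists_leftInverse_of_injective (LinearMap.ker_eq_bot.mpr he)
  have hπe : ∀ x, π (e x) = x := fun x => LinearMap.congr_fun hπ x
  have hπsurj : Function.Surjective π := fun x => ⟨e x, hπe x⟩
  let ι : ((Fin τ → Fq) × F) →ₗ[Fq] L := bD.constr Fq fun i => bL (Fin.castLE hnm i)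
  have hι : Function.Injective ι :=
    basisConstr_injective _ (bL.linearIndependent.comp _ (Fin.castLE_injective hnm))
  -- the codeword maps
  let φ : F → (((Fin τ → Fq) × F) →ₗ[Fq] L) := fun a =>
    ι ∘ₗ (LinearMap.prod LinearMap.id ((LinearMap.mulLeft Fq a) ∘ₗ e)) ∘ₗ
      ((LinearMap.fst Fq (Fin τ → Fq) F) - π ∘ₗ (LinearMap.mulLeft Fq a) ∘ₗ
        (LinearMap.snd Fq (Fin τ → Fq) F))
  have hφ : ∀ a (z : (Fin τ → Fq) × F),
      φ a z = ι (z.1 - π (a * z.2), a * e (z.1 - π (a * z.2))) := fun a z => rfl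
  -- rank bound for each codeword
  have hrank_le : ∀ a : F, Module.finrank Fq (LinearMap.range (φ a)) ≤ τ := by
    intro a
    have h0 : φ a = (ι ∘ₗ (LinearMap.prod LinearMap.id ((LinearMap.mulLeft Fq a) ∘ₗ e))) ∘ₗ
        ((LinearMap.fst Fq (Fin τ → Fq) F) - π ∘ₗ (LinearMap.mulLeft Fq a) ∘ₗ
          (LinearMap.snd Fq (Fin τ → Fq) F)) := by
      rw [LinearMap.comp_assoc]
    have h1 : LinearMap.range (φ a) ≤
        LinearMap.range (ι ∘ₗ (LinearMap.prod LinearMap.id ((LinearMap.mulLeft Fq a) ∘ₗ e))) := by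
      rw [h0]
      exact LinearMap.range_comp_le_range _ _
    calc Module.finrank Fq (LinearMap.range (φ a))
        ≤ Module.finrank Fq (LinearMap.range
            (ι ∘ₗ (LinearMap.prod LinearMap.id ((LinearMap.mulLeft Fq a) ∘ₗ e)))) :=
          Submodule.finrank_mono h1
      _ ≤ Module.finrank Fq (Fin τ → Fq) := LinearMap.finrank_range_le _
      _ = τ := by rw [Module.finrank_pi, Fintype.card_fin]
  have hmul_inj : ∀ c : F, c ≠ 0 → Function.Injective (LinearMap.mulLeft Fq c) := by
    intro c hc x y hxy
    simp only [LinearMap.mulLeft_apply] at hxy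
    exact mul_left_cancel₀ hc hxy
  -- distance bound
  have hrank_ge : ∀ a b : F, a ≠ b →
      2 * τ ≤ Module.finrank Fq (LinearMap.range (φ a - φ b)) := by
    intro a b hab
    set ψ := π ∘ₗ LinearMap.mulLeft Fq (a - b) with hψdef
    have hψsurj : Function.Surjective ψ := by
      have h1 : Function.Surjective (LinearMap.mulLeft Fq (a - b)) :=
        LinearMap.injective_iff_surjective.mp (hmul_inj _ (sub_ne_zero.mpr hab))
      exact hπsurj.comp h1
    have hψker : Module.finrank Fq (LinearMap.ker ψ) = s - τ := by
      have h2 := LinearMap.finrank_range_add_finrank_ker ψ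
      rw [LinearMap.range_eq_top.mpr hψsurj, finrank_top, Module.finrank_pi,
        Fintype.card_fin, ← hsdef] at h2
      omega
    have hker : ∀ z : (Fin τ → Fq) × F, z ∈ LinearMap.ker (φ a - φ b) →
        z.2 ∈ LinearMap.ker ψ ∧ z.1 = π (a * z.2) := by
      intro z hz
      rw [LinearMap.mem_ker, LinearMap.sub_apply, sub_eq_zero, hφ, hφ] at hz
      have hz' := hι hz
      have h1 : z.1 - π (a * z.2) = z.1 - π (b * z.2) := congrArg Prod.fst hz'
      have h2 : a * e (z.1 - π (a * z.2)) = b * e (z.1 - π (b * z.2)) :=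
        congrArg Prod.snd hz'
      rw [← h1] at h2
      have h3 : (a - b) * e (z.1 - π (a * z.2)) = 0 := by
        rw [sub_mul, h2]; ring
      have h4 : e (z.1 - π (a * z.2)) = 0 :=
        (mul_eq_zero.mp h3).resolve_left (sub_ne_zero.mpr hab)
      have h5 : z.1 - π (a * z.2) = 0 := by
        apply he; rw [h4, map_zero]
      have h6 : z.1 = π (a * z.2) := by
        rw [sub_eq_zero] at h5; exact h5
      have h7 : z.1 = π (b * z.2) := by
        rw [h5, eq_comm, sub_eq_zero] at h1
        exact h1
      refine ⟨?_, h6⟩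
      rw [LinearMap.mem_ker, hψdef, LinearMap.comp_apply, LinearMap.mulLeft_apply,
        sub_mul, map_sub, ← h6, ← h7, sub_self]
    -- inject the kernel into ker ψ
    let θ : LinearMap.ker (φ a - φ b) →ₗ[Fq] LinearMap.ker ψ :=
      LinearMap.codRestrict (LinearMap.ker ψ)
        ((LinearMap.snd Fq (Fin τ → Fq) F) ∘ₗ (LinearMap.ker (φ a - φ b)).subtype)
        (fun z => (hker z.1 z.2).1)
    have hθ : Function.Injective θ := by
      intro z w hzw
      have h1 : (z : (Fin τ → Fq) × F).2 = (w : (Fin τ → Fq) × F).2 :=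
        congrArg Subtype.val hzw
      have h2 : (z : (Fin τ → Fq) × F).1 = (w : (Fin τ → Fq) × F).1 := by
        rw [(hker z.1 z.2).2, (hker w.1 w.2).2, h1]
      exact Subtype.ext (Prod.ext h2 h1)
    have hkle : Module.finrank Fq (LinearMap.ker (φ a - φ b)) ≤ s - τ := by
      rw [← hψker]
      exact LinearMap.finrank_le_finrank_of_injective hθ
    have h2 := LinearMap.finrank_range_add_finrank_ker (φ a - φ b)
    rw [hD] at h2
    omega
  -- assemble
  let c : F → (Fin n → L) := fun a i => φ a (bD i)
  have hvr_diff : ∀ a b : F, vrank Fq (c a - c b) =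
      Module.finrank Fq (LinearMap.range (φ a - φ b)) := by
    intro a b
    have h1 : c a - c b = fun i => (φ a - φ b) (bD i) := by
      funext i
      simp [c, LinearMap.sub_apply]
    rw [h1, vrank_of_map]
  have hc_inj : Function.Injective c := by
    intro a b hab
    by_contra hne
    have h1 := hrank_ge a b hne
    rw [← hvr_diff] at h1
    have h2 : c a - c b = 0 := by rw [hab, sub_self]
    rw [h2] at h1
    unfold vrank at h1
    haveI : Nonempty (Fin n) := ⟨⟨0, by omega⟩⟩
    rw [Set.range_zero, Submodule.span_zero_singleton, finrank_bot] at h1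
    omega
  refine ⟨c, hc_inj, ?_, ?_⟩
  · intro a
    have h1 : (0 : Fin n → L) - c a = fun i => (-(φ a)) (bD i) := by
      funext i
      simp [c]
    rw [h1, vrank_of_map, LinearMap.range_neg]
    exact hrank_le a
  · intro a b hab
    rw [hvr_diff]
    exact hrank_ge a b hab

/-- Special case `τ = ⌊(d-1)/2⌋ + 1`: for `n ≤ m` (and `d ≤ n - 1` when `d` is odd), there
exists a rank-metric code `C ⊆ F_{q^m}^n` with minimum rank distance at least `d` and a
word `r` such that the ball of rank radius `τ` around `r` contains at least `q^{n-τ}`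
codewords of `C`. -/
theorem list_size_lower_bound_half_dist_plus_one
    {Fq L : Type*} [Field Fq] [Fintype Fq] [Field L] [Algebra Fq L]
    {q m n d τ : ℕ} (hq : q = Fintype.card Fq) (hm : Module.finrank Fq L = m)
    (hnm : n ≤ m) (hd0 : 0 < d) (hdn : d ≤ n) (hodd : Odd d → d ≤ n - 1)
    (hτ : τ = (d - 1) / 2 + 1) :
    ∃ C : Set (Fin n → L),
      (∀ c₁ ∈ C, ∀ c₂ ∈ C, c₁ ≠ c₂ → d ≤ vrank Fq (c₁ - c₂)) ∧
      ∃ r : Fin n → L,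
        q ^ (n - τ) ≤ Nat.card {c : Fin n → L // c ∈ C ∧ vrank Fq (r - c) ≤ τ} := by
  classical
  have hparity : d % 2 = 1 → d ≤ n - 1 := fun h => hodd (Nat.odd_iff.mpr h)
  have hτ1 : 1 ≤ τ := by omega
  have h2τn : 2 * τ ≤ n := by omega
  have hd2τ : d ≤ 2 * τ := by omega
  have hτs : τ ≤ n - τ := by omega
  have hs0 : n - τ ≠ 0 := by omega
  haveI : FiniteDimensional Fq L := FiniteDimensional.of_finrank_pos (by omega)
  have hF : Module.finrank Fq (ExtField Fq (n - τ)) = n - τ := ExtField.finrank_eq Fq hs0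
  haveI : Finite (ExtField Fq (n - τ)) := Module.finite_of_finite Fq
  haveI : Finite L := Module.finite_of_finite Fq
  obtain ⟨c, hc_inj, hc_ball, hc_dist⟩ :=
    exists_code_family (F := ExtField Fq (n - τ)) (L := L) (n := n) (τ := τ) hτ1
      (by rw [hF]; omega) (by rw [hF]; omega) (by rw [hm]; exact hnm)
  refine ⟨Set.range c, ?_, 0, ?_⟩
  · rintro c₁ ⟨a, rfl⟩ c₂ ⟨b, rfl⟩ hne
    have hab : a ≠ b := fun h => hne (by rw [h])
    exact le_trans hd2τ (hc_dist a b hab)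
  · let j : (ExtField Fq (n - τ)) →
        {c' : Fin n → L // c' ∈ Set.range c ∧ vrank Fq ((0 : Fin n → L) - c') ≤ τ} :=
      fun a => ⟨c a, ⟨a, rfl⟩, hc_ball a⟩
    have hj : Function.Injective j := fun a b hab =>
      hc_inj (congrArg Subtype.val hab)
    haveI : Fintype (ExtField Fq (n - τ)) := Fintype.ofFinite _
    have hcardF : Nat.card (ExtField Fq (n - τ)) = q ^ (n - τ) := by
      rw [Nat.card_eq_fintype_card, Module.card_eq_pow_finrank (K := Fq) (V := ExtField Fq (n - τ)),
        hF, hq]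
    calc q ^ (n - τ) = Nat.card (ExtField Fq (n - τ)) := hcardF.symm
      _ ≤ _ := Nat.card_le_card_of_injective j hj
end

section
/- Weight distribution consequence for MRD codes: if C is a linear MRD code of length n over F_{q^m} (n ≤ m) with minimum rank distance τ (i.e., dimension n−τ+1), then the number of codewords of C of rank exactly τ equals [n choose τ]_q · (q^m − 1). -/
/-- The Gaussian binomial coefficient `[n choose r]_q` (the division is exact). -/
def gaussBinom (q n r : ℕ) : ℕ :=
  (∏ i ∈ Finset.range r, (q ^ n - q ^ i)) / (∏ i ∈ Finset.range r, (q ^ r - q ^ i))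

open Finset

lemma MRDaux_prod_factor (q a k : ℕ) (hk : k ≤ a) :
    ∏ i ∈ range k, (q ^ a - q ^ i) =
      (∏ i ∈ range k, q ^ i) * ∏ i ∈ range k, (q ^ (a - i) - 1) := by
  rw [← Finset.prod_mul_distrib]
  refine Finset.prod_congr rfl fun i hi => ?_
  have hia : i ≤ a := le_trans (Nat.le_of_lt (mem_range.1 hi)) hk
  have h : q ^ i * q ^ (a - i) = q ^ a := by rw [← pow_add]; congr 1; omega
  rw [Nat.mul_sub, mul_one, h]

lemma MRDaux_prod_reindex (q a k : ℕ) (hk : k ≤ a) :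
    ∏ i ∈ range k, (q ^ (a - i) - 1) = ∏ i ∈ Ico (a - k) a, (q ^ (i + 1) - 1) := by
  rw [Finset.prod_Ico_eq_prod_range]
  have hak : a - (a - k) = k := by omega
  rw [hak]
  rw [← Finset.prod_range_reflect (fun j => q ^ (a - k + j + 1) - 1) k]
  refine Finset.prod_congr rfl fun i hi => ?_
  have : i < k := mem_range.1 hi
  congr 2
  omega

lemma MRDaux_sym (q n τ : ℕ) (hτ : τ ≤ n) :
    (∏ i ∈ range τ, (q ^ n - q ^ i)) * ∏ i ∈ range (n - τ), (q ^ (n - τ) - q ^ i)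
      = (∏ i ∈ range (n - τ), (q ^ n - q ^ i)) * ∏ i ∈ range τ, (q ^ τ - q ^ i) := by
  set P : ℕ → ℕ → ℕ := fun a b => ∏ i ∈ Ico a b, (q ^ (i + 1) - 1) with hP
  have h1 : P 0 (n - τ) * P (n - τ) n = P 0 n :=
    Finset.prod_Ico_consecutive _ (Nat.zero_le _) (Nat.sub_le _ _)
  have h2 : P 0 τ * P τ n = P 0 n :=
    Finset.prod_Ico_consecutive _ (Nat.zero_le _) hτ
  rw [MRDaux_prod_factor q n τ hτ, MRDaux_prod_factor q (n - τ) (n - τ) le_rfl,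
    MRDaux_prod_factor q n (n - τ) (Nat.sub_le _ _), MRDaux_prod_factor q τ τ le_rfl,
    MRDaux_prod_reindex q n τ hτ, MRDaux_prod_reindex q (n - τ) (n - τ) le_rfl,
    MRDaux_prod_reindex q n (n - τ) (Nat.sub_le _ _), MRDaux_prod_reindex q τ τ le_rfl]
  have e1 : n - (n - τ) = τ := by omega
  rw [Nat.sub_self, Nat.sub_self, e1]
  calc ((∏ i ∈ range τ, q ^ i) * P (n - τ) n) * ((∏ i ∈ range (n - τ), q ^ i) * P 0 (n - τ))
      = ((∏ i ∈ range τ, q ^ i) * (∏ i ∈ range (n - τ), q ^ i)) * (P 0 (n - τ) * P (n - τ) n) := by ring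
    _ = ((∏ i ∈ range τ, q ^ i) * (∏ i ∈ range (n - τ), q ^ i)) * (P 0 τ * P τ n) := by rw [h1, h2]
    _ = ((∏ i ∈ range (n - τ), q ^ i) * P τ n) * ((∏ i ∈ range τ, q ^ i) * P 0 τ) := by ring

open Submodule Module

section count
variable (K : Type*) {V : Type*} [Field K] [Fintype K] [AddCommGroup V] [Module K V]

lemma MRDaux_card_module [Module.Finite K V] :
    Nat.card V = Fintype.card K ^ finrank K V := by
  have : Finite V := Module.finite_of_finite K
  cases nonempty_fintype V
  rw [Nat.card_eq_fintype_card]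
  exact card_eq_pow_finrank

lemma MRDaux_card_LI [FiniteDimensional K V] (r : ℕ) :
    Nat.card {f : Fin r → V // LinearIndependent K f} =
      ∏ i ∈ range r, (Fintype.card K ^ finrank K V - Fintype.card K ^ i) := by
  classical
  have : Finite V := Module.finite_of_finite K
  cases nonempty_fintype V
  induction r with
  | zero =>
    have : Unique {f : Fin 0 → V // LinearIndependent K f} :=
      ⟨⟨default, linearIndependent_empty_type⟩, fun f => Subtype.ext (Subsingleton.elim _ _)⟩
    simp [Nat.card_unique]
  | succ r ih =>
    have e : {f : Fin (r + 1) → V // LinearIndependent K f} ≃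
        Σ g : {f : Fin r → V // LinearIndependent K f},
          {x : V // x ∉ span K (Set.range g.1)} :=
      { toFun := fun f =>
          ⟨⟨Fin.init f.1, (linearIndependent_fin_succ'.1 f.2).1⟩,
            ⟨f.1 (Fin.last r), (linearIndependent_fin_succ'.1 f.2).2⟩⟩
        invFun := fun p =>
          ⟨Fin.snoc p.1.1 p.2.1, linearIndependent_fin_snoc.2 ⟨p.1.2, p.2.2⟩⟩
        left_inv := fun f => Subtype.ext (Fin.snoc_init_self f.1)
        right_inv := fun p => by
          rcases p with ⟨⟨g, hg⟩, ⟨x, hx⟩⟩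
          refine Sigma.ext (Subtype.ext (by simp))
            ((Subtype.heq_iff_coe_eq fun y => by simp).2 (by simp)) }
    have hfib : ∀ g : {f : Fin r → V // LinearIndependent K f},
        Fintype.card {x : V // x ∉ span K (Set.range g.1)} =
          Fintype.card K ^ finrank K V - Fintype.card K ^ r := by
      intro g
      have hs : Nat.card (span K (Set.range g.1)) =
          Fintype.card K ^ finrank K (span K (Set.range g.1)) := MRDaux_card_module K
      rw [finrank_span_eq_card g.2] at hs
      simp only [Fintype.card_fin] at hs
      have hc : Fintype.card {x : V // x ∈ span K (Set.range g.1)} = Fintype.card K ^ r := by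
        rw [← Nat.card_eq_fintype_card]; exact hs
      rw [Fintype.card_subtype_compl, hc, card_eq_pow_finrank (K := K) (V := V)]
    rw [Nat.card_congr e, Nat.card_eq_fintype_card, Fintype.card_sigma, Finset.prod_range_succ,
      ← ih]
    calc ∑ g : {f : Fin r → V // LinearIndependent K f},
          Fintype.card {x : V // x ∉ span K (Set.range g.1)}
        = ∑ _g : {f : Fin r → V // LinearIndependent K f},
            (Fintype.card K ^ finrank K V - Fintype.card K ^ r) :=
          Finset.sum_congr rfl fun g _ => hfib g
      _ = Nat.card {f : Fin r → V // LinearIndependent K f} *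
            (Fintype.card K ^ finrank K V - Fintype.card K ^ r) := by
          rw [Finset.sum_const, smul_eq_mul, Nat.card_eq_fintype_card, Finset.card_univ]

lemma MRDaux_card_span_fiber [FiniteDimensional K V] (r : ℕ) (W : Submodule K V)
    (hW : finrank K W = r) :
    Nat.card {f : Fin r → V // LinearIndependent K f ∧ span K (Set.range f) = W} =
      ∏ i ∈ range r, (Fintype.card K ^ r - Fintype.card K ^ i) := by
  have h := MRDaux_card_LI K (V := W) r
  rw [hW] at h
  rw [← h]
  refine Nat.card_congr ?_
  exact
  { toFun := fun f =>
      ⟨fun i => ⟨f.1 i, by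
          have hm := subset_span (R := K) (Set.mem_range_self (f := f.1) i)
          rwa [f.2.2] at hm⟩,
        LinearIndependent.of_comp W.subtype f.2.1⟩
    invFun := fun g =>
      ⟨fun i => (g.1 i : V),
        by
          have hli : LinearIndependent K (fun i => (g.1 i : V)) :=
            g.2.map' W.subtype (ker_subtype W)
          refine ⟨hli, ?_⟩
          have htop : span K (Set.range g.1) = ⊤ := by
            apply Submodule.eq_top_of_finrank_eq
            rw [finrank_span_eq_card g.2, Fintype.card_fin, hW]
          have : (fun i => (g.1 i : V)) = W.subtype ∘ g.1 := rfl
          rw [this, Set.range_comp, ← Submodule.map_span, htop, Submodule.map_top,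
            range_subtype]⟩
    left_inv := fun f => Subtype.ext rfl
    right_inv := fun g => Subtype.ext (funext fun i => Subtype.ext rfl) }

lemma MRDaux_card_subspaces [FiniteDimensional K V] (r : ℕ) :
    Nat.card {W : Submodule K V // finrank K W = r} *
        ∏ i ∈ range r, (Fintype.card K ^ r - Fintype.card K ^ i)
      = ∏ i ∈ range r, (Fintype.card K ^ finrank K V - Fintype.card K ^ i) := by
  classical
  have : Finite V := Module.finite_of_finite K
  cases nonempty_fintype V
  haveI : Finite (Submodule K V) :=
    Finite.of_injective (fun W => (W : Set V)) SetLike.coe_injective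
  have e : {f : Fin r → V // LinearIndependent K f} ≃
      Σ W : {W : Submodule K V // finrank K W = r},
        {f : Fin r → V // LinearIndependent K f ∧ span K (Set.range f) = W.1} :=
    { toFun := fun f =>
        ⟨⟨span K (Set.range f.1), by rw [finrank_span_eq_card f.2, Fintype.card_fin]⟩,
          ⟨f.1, f.2, rfl⟩⟩
      invFun := fun p => ⟨p.2.1, p.2.2.1⟩
      left_inv := fun f => rfl
      right_inv := fun p => by
        rcases p with ⟨⟨W, hW⟩, ⟨f, hf, hsp⟩⟩
        dsimp only
        refine Sigma.ext (Subtype.ext hsp) ((Subtype.heq_iff_coe_eq fun y => ?_).2 rfl)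
        dsimp only
        rw [hsp] }
  have hs : Nat.card (Σ W : {W : Submodule K V // finrank K W = r},
      {f : Fin r → V // LinearIndependent K f ∧ span K (Set.range f) = W.1}) =
      Nat.card {W : Submodule K V // finrank K W = r} *
        ∏ i ∈ range r, (Fintype.card K ^ r - Fintype.card K ^ i) := by
    rw [Nat.card_eq_fintype_card, Fintype.card_sigma]
    calc ∑ W : {W : Submodule K V // finrank K W = r},
        Fintype.card {f : Fin r → V // LinearIndependent K f ∧ span K (Set.range f) = W.1}
      = ∑ _W : {W : Submodule K V // finrank K W = r},
          ∏ i ∈ range r, (Fintype.card K ^ r - Fintype.card K ^ i) :=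
        Finset.sum_congr rfl fun W _ => by
          rw [← Nat.card_eq_fintype_card, MRDaux_card_span_fiber K r W.1 W.2]
    _ = Nat.card {W : Submodule K V // finrank K W = r} *
          ∏ i ∈ range r, (Fintype.card K ^ r - Fintype.card K ^ i) := by
        rw [Finset.sum_const, smul_eq_mul, Nat.card_eq_fintype_card, Finset.card_univ]
  rw [← MRDaux_card_LI K r, Nat.card_congr e, hs]

end count
section pairing
variable (Fq : Type*) {L : Type*} [Field Fq] [Fintype Fq] [Field L] [Algebra Fq L] {n : ℕ}

lemma MRDaux_rank_nullity (c : Fin n → L) :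
    vrank Fq c + finrank Fq (LinearMap.ker (Fintype.linearCombination Fq c)) = n := by
  have h := LinearMap.finrank_range_add_finrank_ker (Fintype.linearCombination Fq c)
  rw [Fintype.range_linearCombination, Module.finrank_fin_fun] at h
  exact h

lemma MRDaux_perW {n τ : ℕ} [FiniteDimensional Fq L]
    (hτ1 : 1 ≤ τ) (hτn : τ ≤ n)
    (C : Submodule L (Fin n → L))
    (hdim : finrank L C = n - τ + 1)
    (hdist : ∀ c ∈ C, c ≠ 0 → τ ≤ vrank Fq c)
    (W : Submodule Fq (Fin n → Fq)) (hW : finrank Fq W = n - τ) :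
    Nat.card {c : Fin n → L // c ∈ C ∧ c ≠ 0 ∧
        W ≤ LinearMap.ker (Fintype.linearCombination Fq c)} = Nat.card L - 1 := by
  classical
  haveI : Finite L := Module.finite_of_finite Fq
  set s := n - τ with hs
  -- a basis of W, extended by a vector outside W
  let w : Basis (Fin s) Fq W := finBasisOfFinrankEq Fq W hW
  let bw : Fin s → (Fin n → Fq) := fun i => (w i : Fin n → Fq)
  have hbwli : LinearIndependent Fq bw := w.linearIndependent.map' W.subtype (ker_subtype W)
  have hbwspan : span Fq (Set.range bw) = W := by
    have hr : Set.range bw = W.subtype '' Set.range w := Set.range_comp _ _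
    rw [hr, ← Submodule.map_span, w.span_eq, Submodule.map_top, range_subtype]
  obtain ⟨e, he⟩ : ∃ e, e ∉ W := by
    by_contra h
    push_neg at h
    have : W = ⊤ := eq_top_iff'.2 h
    rw [this, finrank_top, Module.finrank_fin_fun] at hW
    omega
  set b : Fin (s + 1) → (Fin n → Fq) := Fin.snoc bw e with hb
  have hbli : LinearIndependent Fq b :=
    linearIndependent_fin_snoc.2 ⟨hbwli, by rw [hbwspan]; exact he⟩
  -- the evaluation linear map
  let psi : (Fin n → L) →ₗ[L] (Fin (s + 1) → L) :=
    { toFun := fun c j => ∑ i, algebraMap Fq L (b j i) * c i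
      map_add' := by
        intro x y
        funext j
        simp [mul_add, Finset.sum_add_distrib]
      map_smul' := by
        intro a x
        funext j
        simp only [Pi.smul_apply, smul_eq_mul, RingHom.id_apply]
        rw [Finset.mul_sum]
        exact Finset.sum_congr rfl fun i _ => by ring }
  have hpsi : ∀ (c : Fin n → L) (j : Fin (s + 1)),
      psi c j = Fintype.linearCombination Fq c (b j) := by
    intro c j
    rw [Fintype.linearCombination_apply]
    show (∑ i, algebraMap Fq L (b j i) * c i) = ∑ i, b j i • c i
    exact Finset.sum_congr rfl fun i _ => (Algebra.smul_def _ _).symm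
  set Ψ : C →ₗ[L] (Fin (s + 1) → L) := psi.comp C.subtype with hΨ
  have hkey : ∀ x : C, Ψ x = 0 → (x : Fin n → L) = 0 := by
    intro x hx
    by_contra hx0
    have hd := hdist x.1 x.2 hx0
    have hsub : span Fq (Set.range b) ≤
        LinearMap.ker (Fintype.linearCombination Fq (x : Fin n → L)) := by
      rw [span_le]
      rintro _ ⟨j, rfl⟩
      rw [SetLike.mem_coe, LinearMap.mem_ker, ← hpsi]
      exact congrFun hx j
    have h1 : s + 1 ≤ finrank Fq
        (LinearMap.ker (Fintype.linearCombination Fq (x : Fin n → L))) := by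
      have := Submodule.finrank_mono hsub
      rwa [finrank_span_eq_card hbli, Fintype.card_fin] at this
    have h2 := MRDaux_rank_nullity Fq (x : Fin n → L)
    omega
  have hker : LinearMap.ker Ψ = ⊥ := by
    rw [LinearMap.ker_eq_bot']
    intro x hx
    exact Submodule.coe_eq_zero.1 (hkey x hx)
  have hinj : Function.Injective Ψ := LinearMap.ker_eq_bot.1 hker
  have hfr : finrank L C = finrank L (Fin (s + 1) → L) := by
    rw [hdim, Module.finrank_fin_fun]
  have hbij : Function.Bijective Ψ :=
    ⟨hinj, (LinearMap.injective_iff_surjective_of_finrank_eq_finrank hfr).1 hinj⟩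
  let E := Equiv.ofBijective Ψ hbij
  -- chain of equivalences
  let e1 : {c : Fin n → L // c ∈ C ∧ c ≠ 0 ∧
      W ≤ LinearMap.ker (Fintype.linearCombination Fq c)} ≃
      {x : C // (x : Fin n → L) ≠ 0 ∧
        W ≤ LinearMap.ker (Fintype.linearCombination Fq (x : Fin n → L))} :=
    { toFun := fun c => ⟨⟨c.1, c.2.1⟩, c.2.2.1, c.2.2.2⟩
      invFun := fun x => ⟨x.1.1, x.1.2, x.2.1, x.2.2⟩
      left_inv := fun c => Subtype.ext rfl
      right_inv := fun x => Subtype.ext rfl }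
  have hcond : ∀ x : C, ((x : Fin n → L) ≠ 0 ∧
      W ≤ LinearMap.ker (Fintype.linearCombination Fq (x : Fin n → L))) ↔
      (E x ≠ 0 ∧ ∀ j : Fin s, E x j.castSucc = 0) := by
    intro x
    constructor
    · rintro ⟨hx0, hxW⟩
      refine ⟨?_, ?_⟩
      · intro h0
        exact hx0 (hkey x h0)
      · intro j
        show Ψ x j.castSucc = 0
        have : Ψ x j.castSucc = Fintype.linearCombination Fq (x : Fin n → L) (b j.castSucc) :=
          hpsi _ _
        rw [this, hb, Fin.snoc_castSucc]
        exact hxW (w j).2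
    · rintro ⟨hx0, hxW⟩
      constructor
      · intro h0
        apply hx0
        show Ψ x = 0
        rw [hΨ]
        show psi (x : Fin n → L) = 0
        rw [h0]
        exact map_zero psi
      · rw [← hbwspan, span_le]
        rintro _ ⟨j, rfl⟩
        have hbwj : bw j = b j.castSucc := by rw [hb, Fin.snoc_castSucc]
        rw [SetLike.mem_coe, LinearMap.mem_ker, hbwj, ← hpsi]
        exact hxW j
  let e2 : {x : C // (x : Fin n → L) ≠ 0 ∧
      W ≤ LinearMap.ker (Fintype.linearCombination Fq (x : Fin n → L))} ≃
      {y : Fin (s + 1) → L // y ≠ 0 ∧ ∀ j : Fin s, y j.castSucc = 0} :=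
    Equiv.subtypeEquiv E hcond
  let e3 : {y : Fin (s + 1) → L // y ≠ 0 ∧ ∀ j : Fin s, y j.castSucc = 0} ≃
      {t : L // t ≠ 0} :=
    { toFun := fun y => ⟨y.1 (Fin.last s), by
        intro h0
        apply y.2.1
        funext j
        refine Fin.lastCases ?_ ?_ j
        · exact h0
        · exact y.2.2⟩
      invFun := fun t => ⟨Fin.snoc (fun _ => 0) t.1, by
        constructor
        · intro h
          apply t.2
          have := congrFun h (Fin.last s)
          rwa [Fin.snoc_last] at this
        · intro j
          rw [Fin.snoc_castSucc]⟩
      left_inv := fun y => Subtype.ext (funext fun j => by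
        dsimp only
        refine Fin.lastCases ?_ ?_ j
        · rw [Fin.snoc_last]
        · intro i
          rw [Fin.snoc_castSucc]
          exact (y.2.2 i).symm)
      right_inv := fun t => Subtype.ext (by dsimp only; rw [Fin.snoc_last]) }
  rw [Nat.card_congr ((e1.trans e2).trans e3)]
  cases nonempty_fintype L
  rw [Nat.card_eq_fintype_card, Nat.card_eq_fintype_card]
  rw [Fintype.card_subtype_compl (p := fun t : L => t = 0), Fintype.card_subtype_eq (0 : L)]

end pairing

/-- Weight distribution consequence for MRD codes: if `C` is a linear MRD code of length
`n ≤ m` over `F_{q^m}` with minimum rank distance `τ` (i.e. dimension `n - τ + 1`), then the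
number of codewords of `C` of rank exactly `τ` equals `[n choose τ]_q · (q^m - 1)`. -/
theorem MRD_weight_distribution
    {Fq L : Type*} [Field Fq] [Fintype Fq] [Field L] [Algebra Fq L]
    {q m n τ : ℕ} (hq : q = Fintype.card Fq) (hm : Module.finrank Fq L = m)
    (hτ1 : 1 ≤ τ) (hτn : τ ≤ n) (hnm : n ≤ m)
    (C : Submodule L (Fin n → L))
    (hdim : Module.finrank L ↥C = n - τ + 1)
    (hdist : ∀ c ∈ C, c ≠ 0 → τ ≤ vrank Fq c) :
    Nat.card {c : Fin n → L // c ∈ C ∧ vrank Fq c = τ} =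
      gaussBinom q n τ * (q ^ m - 1) := by
  classical
  subst hq
  set q := Fintype.card Fq with hq
  haveI : FiniteDimensional Fq L := FiniteDimensional.of_finrank_pos (by rw [hm]; omega)
  haveI : Finite L := Module.finite_of_finite Fq
  haveI : Finite (Submodule Fq (Fin n → Fq)) :=
    Finite.of_injective (fun W => (W : Set (Fin n → Fq))) SetLike.coe_injective
  have hcardL : Nat.card L = q ^ m := by rw [MRDaux_card_module Fq, hm]
  have hne0 : ∀ c : Fin n → L, vrank Fq c = τ → c ≠ 0 := by
    intro c hv h0
    haveI : Nonempty (Fin n) := ⟨⟨0, by omega⟩⟩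
    rw [h0] at hv
    rw [vrank, Set.range_zero, Submodule.span_zero_singleton, finrank_bot] at hv
    omega
  -- partition the codewords of rank τ according to the kernel of the pairing map
  let g : {c : Fin n → L // c ∈ C ∧ vrank Fq c = τ} →
      {W : Submodule Fq (Fin n → Fq) // finrank Fq W = n - τ} := fun c =>
    ⟨LinearMap.ker (Fintype.linearCombination Fq c.1), by
      have h := MRDaux_rank_nullity Fq c.1
      have := c.2.2
      omega⟩
  have fib : ∀ W : {W : Submodule Fq (Fin n → Fq) // finrank Fq W = n - τ},
      Nat.card {c : {c : Fin n → L // c ∈ C ∧ vrank Fq c = τ} // g c = W} =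
        Nat.card L - 1 := by
    intro W
    rw [← MRDaux_perW Fq hτ1 hτn C hdim hdist W.1 W.2]
    refine Nat.card_congr ?_
    refine
      { toFun := fun x => ⟨x.1.1, x.1.2.1, hne0 x.1.1 x.1.2.2, ?_⟩
        invFun := fun y => ⟨⟨y.1, y.2.1, ?_⟩, ?_⟩
        left_inv := fun x => Subtype.ext (Subtype.ext rfl)
        right_inv := fun y => Subtype.ext rfl }
    · have := congrArg Subtype.val x.2
      exact le_of_eq this.symm
    · -- vrank Fq y.1 = τ
      have hle : W.1 ≤ LinearMap.ker (Fintype.linearCombination Fq y.1) := y.2.2.2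
      have hmono := Submodule.finrank_mono hle
      have hrn := MRDaux_rank_nullity Fq y.1
      have hd := hdist y.1 y.2.1 y.2.2.1
      have hW := W.2
      omega
    · -- g ⟨y.1, _⟩ = W
      refine Subtype.ext ?_
      have hle : W.1 ≤ LinearMap.ker (Fintype.linearCombination Fq y.1) := y.2.2.2
      have hmono := Submodule.finrank_mono hle
      have hrn := MRDaux_rank_nullity Fq y.1
      have hd := hdist y.1 y.2.1 y.2.2.1
      have hW := W.2
      exact (Submodule.eq_of_le_of_finrank_eq hle (by omega)).symm
  have hsigma : Nat.card {c : Fin n → L // c ∈ C ∧ vrank Fq c = τ} =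
      Nat.card {W : Submodule Fq (Fin n → Fq) // finrank Fq W = n - τ} * (Nat.card L - 1) := by
    rw [← Nat.card_congr (Equiv.sigmaFiberEquiv g)]
    haveI : Finite (Fin n → L) := inferInstance
    cases nonempty_fintype {W : Submodule Fq (Fin n → Fq) // finrank Fq W = n - τ}
    cases nonempty_fintype {c : Fin n → L // c ∈ C ∧ vrank Fq c = τ}
    rw [Nat.card_eq_fintype_card, Fintype.card_sigma]
    calc ∑ W : {W : Submodule Fq (Fin n → Fq) // finrank Fq W = n - τ},
          Fintype.card {c : {c : Fin n → L // c ∈ C ∧ vrank Fq c = τ} // g c = W}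
        = ∑ _W : {W : Submodule Fq (Fin n → Fq) // finrank Fq W = n - τ},
            (Nat.card L - 1) :=
          Finset.sum_congr rfl fun W _ => by rw [← Nat.card_eq_fintype_card, fib W]
      _ = Nat.card {W : Submodule Fq (Fin n → Fq) // finrank Fq W = n - τ} *
            (Nat.card L - 1) := by
          rw [Finset.sum_const, smul_eq_mul,
            Nat.card_eq_fintype_card
              (α := {W : Submodule Fq (Fin n → Fq) // finrank Fq W = n - τ}),
            Finset.card_univ]
  -- count the subspaces
  have hq2 : 1 < q := Fintype.one_lt_card
  have hBτ : 0 < ∏ i ∈ Finset.range τ, (q ^ τ - q ^ i) :=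
    Finset.prod_pos fun i hi =>
      Nat.sub_pos_of_lt (Nat.pow_lt_pow_right hq2 (Finset.mem_range.1 hi))
  have hBs : 0 < ∏ i ∈ Finset.range (n - τ), (q ^ (n - τ) - q ^ i) :=
    Finset.prod_pos fun i hi =>
      Nat.sub_pos_of_lt (Nat.pow_lt_pow_right hq2 (Finset.mem_range.1 hi))
  have hcount := MRDaux_card_subspaces Fq (V := Fin n → Fq) (n - τ)
  rw [Module.finrank_fin_fun] at hcount
  have hsym := MRDaux_sym q n τ hτn
  have hkey : Nat.card {W : Submodule Fq (Fin n → Fq) // finrank Fq W = n - τ} *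
      ∏ i ∈ Finset.range τ, (q ^ τ - q ^ i) = ∏ i ∈ Finset.range τ, (q ^ n - q ^ i) := by
    apply Nat.eq_of_mul_eq_mul_right hBs
    calc (Nat.card {W : Submodule Fq (Fin n → Fq) // finrank Fq W = n - τ} *
          ∏ i ∈ Finset.range τ, (q ^ τ - q ^ i)) *
            ∏ i ∈ Finset.range (n - τ), (q ^ (n - τ) - q ^ i)
        = (Nat.card {W : Submodule Fq (Fin n → Fq) // finrank Fq W = n - τ} *
            ∏ i ∈ Finset.range (n - τ), (q ^ (n - τ) - q ^ i)) *
              ∏ i ∈ Finset.range τ, (q ^ τ - q ^ i) := by ring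
      _ = (∏ i ∈ Finset.range (n - τ), (q ^ n - q ^ i)) *
            ∏ i ∈ Finset.range τ, (q ^ τ - q ^ i) := by rw [hcount]
      _ = (∏ i ∈ Finset.range τ, (q ^ n - q ^ i)) *
            ∏ i ∈ Finset.range (n - τ), (q ^ (n - τ) - q ^ i) := hsym.symm
  have hgb : (∏ i ∈ Finset.range τ, (q ^ n - q ^ i)) /
      (∏ i ∈ Finset.range τ, (q ^ τ - q ^ i)) =
      Nat.card {W : Submodule Fq (Fin n → Fq) // finrank Fq W = n - τ} :=
    Nat.div_eq_of_eq_mul_left hBτ hkey.symm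
  rw [hsigma, hcardL]
  unfold gaussBinom
  rw [hgb]
end
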